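/- arXiv:1204.4431 — 4 statements merged into one kernel-verified Lean document; each statement's English description precedes it below -/
import Mathlib

section
/- If a function g from a finite set T satisfies |T| - |g(T)| ≥ k, then there exists a subset T' of T with |T'| = 2k and |g(T')| ≤ k. -/
/-- If a function `g` on a finite set `T` with `|T| ≥ 2k` satisfies `|T| - |g(T)| ≥ k`,
then there exists a subset `T' ⊆ T` with `|T'| = 2k` and `|g(T')| ≤ k`. -/
theorem stmt_0 {α β : Type*} [DecidableEq α] [DecidableEq β]
    (k : ℕ) (hk : 1 ≤ k) (T : Finset α) (g : α → β)
    (hT : 2 * k ≤ T.card)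
    (h : k ≤ T.card - (T.image g).card) :
    ∃ T' ⊆ T, T'.card = 2 * k ∧ (T'.image g).card ≤ k := by
  classical
  have hTne : T.Nonempty := by
    rw [← Finset.card_pos]; omega
  -- choose a representative for each value in the image
  set r : β → α := fun b => if hb : ∃ x ∈ T, g x = b then hb.choose else hTne.choose with hr
  have hrT : ∀ b ∈ T.image g, r b ∈ T := by
    intro b hb
    rw [Finset.mem_image] at hb
    obtain ⟨x, hx, hgx⟩ := hb
    have hex : ∃ x ∈ T, g x = b := ⟨x, hx, hgx⟩
    simp only [hr, dif_pos hex]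
    exact hex.choose_spec.1
  have hgr : ∀ b ∈ T.image g, g (r b) = b := by
    intro b hb
    rw [Finset.mem_image] at hb
    obtain ⟨x, hx, hgx⟩ := hb
    have hex : ∃ x ∈ T, g x = b := ⟨x, hx, hgx⟩
    simp only [hr, dif_pos hex]
    exact hex.choose_spec.2
  set R : Finset α := (T.image g).image r with hR
  have hRsub : R ⊆ T := by
    intro x hx
    rw [hR, Finset.mem_image] at hx
    obtain ⟨b, hb, rfl⟩ := hx
    exact hrT b hb
  have hRcard : R.card = (T.image g).card := by
    rw [hR]
    apply Finset.card_image_of_injOn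
    intro a ha b hb hab
    rw [← hgr a ha, ← hgr b hb, hab]
  -- the excess set
  set E : Finset α := T \ R with hE
  have hEcard : k ≤ E.card := by
    rw [hE, Finset.card_sdiff_of_subset hRsub, hRcard]; exact h
  obtain ⟨E', hE'sub, hE'card⟩ := Finset.exists_subset_card_eq hEcard
  set S : Finset α := T.filter (fun x => g x ∈ E'.image g) with hS
  have hE'T : E' ⊆ T := hE'sub.trans (Finset.sdiff_subset)
  have hE'S : E' ⊆ S := by
    intro x hx
    rw [hS, Finset.mem_filter]
    exact ⟨hE'T hx, Finset.mem_image_of_mem g hx⟩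
  have hST : S ⊆ T := Finset.filter_subset _ _
  have hSimg : S.image g ⊆ E'.image g := by
    intro b hb
    rw [Finset.mem_image] at hb
    obtain ⟨x, hx, rfl⟩ := hb
    exact (Finset.mem_filter.mp hx).2
  have hE'img : (E'.image g).card ≤ k := hE'card ▸ Finset.card_image_le
  -- R' : representatives of values of E'
  set R' : Finset α := (E'.image g).image r with hR'
  have hR'S : R' ⊆ S := by
    intro x hx
    rw [hR', Finset.mem_image] at hx
    obtain ⟨b, hb, rfl⟩ := hx
    have hbT : b ∈ T.image g := Finset.image_subset_image hE'T hb
    rw [hS, Finset.mem_filter]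
    exact ⟨hrT b hbT, by rw [hgr b hbT]; exact hb⟩
  have hR'card : R'.card = (E'.image g).card := by
    rw [hR']
    apply Finset.card_image_of_injOn
    intro a ha b hb hab
    have haT := Finset.image_subset_image hE'T ha
    have hbT := Finset.image_subset_image hE'T hb
    rw [← hgr a haT, ← hgr b hbT, hab]
  have hdisj : Disjoint E' R' := by
    rw [Finset.disjoint_left]
    intro x hx hx'
    have hxE : x ∈ E := hE'sub hx
    rw [hE, Finset.mem_sdiff] at hxE
    apply hxE.2
    rw [hR', Finset.mem_image] at hx'
    obtain ⟨b, hb, rfl⟩ := hx'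
    exact Finset.mem_image_of_mem r (Finset.image_subset_image hE'T hb)
  have hScard : k + (E'.image g).card ≤ S.card := by
    calc k + (E'.image g).card = E'.card + R'.card := by rw [hE'card, hR'card]
    _ = (E' ∪ R').card := (Finset.card_union_of_disjoint hdisj).symm
    _ ≤ S.card := Finset.card_le_card (Finset.union_subset hE'S hR'S)
  by_cases hcase : 2 * k ≤ S.card
  · obtain ⟨u, hu1, hu2, hu3⟩ := Finset.exists_subsuperset_card_eq hE'S (by omega) hcase
    refine ⟨u, hu2.trans hST, hu3, ?_⟩
    calc (u.image g).card ≤ (S.image g).card :=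
          Finset.card_le_card (Finset.image_subset_image hu2)
      _ ≤ (E'.image g).card := Finset.card_le_card hSimg
      _ ≤ k := hE'img
  · push_neg at hcase
    obtain ⟨u, hu1, hu2, hu3⟩ := Finset.exists_subsuperset_card_eq hST (by omega) hT
    refine ⟨u, hu2, hu3, ?_⟩
    have : u.image g ⊆ S.image g ∪ (u \ S).image g := by
      intro b hb
      rw [Finset.mem_image] at hb
      obtain ⟨x, hx, rfl⟩ := hb
      rw [Finset.mem_union]
      by_cases hxS : x ∈ S
      · exact Or.inl (Finset.mem_image_of_mem g hxS)
      · exact Or.inr (Finset.mem_image_of_mem g (Finset.mem_sdiff.mpr ⟨hx, hxS⟩))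
    calc (u.image g).card ≤ (S.image g ∪ (u \ S).image g).card := Finset.card_le_card this
      _ ≤ (S.image g).card + ((u \ S).image g).card := Finset.card_union_le _ _
      _ ≤ (E'.image g).card + (u \ S).card :=
          Nat.add_le_add (Finset.card_le_card hSimg) Finset.card_image_le
      _ ≤ (E'.image g).card + (2 * k - S.card) := by
          rw [Finset.card_sdiff_of_subset hu1, hu3]
      _ ≤ k := by omega
end

section
/- A finite bipartite multigraph G on vertex sets each of size m, with edge set indexed by a key set S, admits an assignment of all but at most s keys to vertices such that each key x with edge (h₁(x), h₂(x)) is assigned to one of its two endpoints and no two keys share a vertex, if and only if ex(G) ≤ s. -/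
namespace CuckooStash

variable {V E : Type*} [Fintype V] [DecidableEq V] [Fintype E] [DecidableEq E]

/-- Adjacency relation induced by the edges in `F` of a multigraph with endpoint map `ends`. -/
def adjOn (ends : E → V × V) (F : Finset E) (u v : V) : Prop :=
  ∃ e ∈ F, ends e = (u, v) ∨ ends e = (v, u)

/-- The setoid whose classes are the connected components (isolated vertices form
    their own components). -/
def compSetoid (ends : E → V × V) (F : Finset E) : Setoid V :=
  Relation.EqvGen.setoid (adjOn ends F)

/-- The number of connected components (isolated vertices count as components). -/
noncomputable def zeta (ends : E → V × V) (F : Finset E) : ℕ :=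
  Nat.card (Quotient (compSetoid ends F))

/-- The cyclomatic number `γ = m - n + ζ`. -/
noncomputable def gamma (ends : E → V × V) (F : Finset E) : ℕ :=
  F.card + zeta ends F - Fintype.card V

open Classical in
/-- The degree of a vertex (a self-loop counts twice). -/
noncomputable def deg (ends : E → V × V) (F : Finset E) (v : V) : ℕ :=
  (F.filter (fun e => (ends e).1 = v)).card + (F.filter (fun e => (ends e).2 = v)).card

open Classical in
/-- The vertex set of the connected component of `v`. -/
noncomputable def compVerts (ends : E → V × V) (F : Finset E) (v : V) : Finset V :=
  Finset.univ.filter (fun u => Relation.EqvGen (adjOn ends F) v u)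

open Classical in
/-- The edge set of the connected component of `v`. -/
noncomputable def compEdges (ends : E → V × V) (F : Finset E) (v : V) : Finset E :=
  F.filter (fun e => Relation.EqvGen (adjOn ends F) v (ends e).1)

/-- Every connected component is acyclic or unicyclic. -/
def GoodComponents (ends : E → V × V) (F : Finset E) : Prop :=
  ∀ v, (compEdges ends F v).card ≤ (compVerts ends F v).card

/-- The excess: the minimum number of edges one has to remove from `F` so that all
    connected components of the remaining graph are acyclic or unicyclic. -/
noncomputable def excess (ends : E → V × V) (F : Finset E) : ℕ :=
  sInf {d : ℕ | ∃ F' ⊆ F, F'.card + d = F.card ∧ GoodComponents ends F'}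

/-- The number of connected components that contain a cycle. -/
noncomputable def zetaCyc (ends : E → V × V) (F : Finset E) : ℕ :=
  Nat.card {c : Quotient (compSetoid ends F) //
    ∃ v, Quotient.mk (compSetoid ends F) v = c ∧
      (compVerts ends F v).card ≤ (compEdges ends F v).card}

/-- A graph is acyclic iff every edge is a bridge. -/
def Acyclic (ends : E → V × V) (F : Finset E) : Prop :=
  ∀ e ∈ F, zeta ends (F.erase e) = zeta ends F + 1

/-- `e` is a cycle edge of `F`: removing it does not disconnect anything. -/
def CycleEdge (ends : E → V × V) (F : Finset E) (e : E) : Prop :=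
  e ∈ F ∧ zeta ends (F.erase e) = zeta ends F

end CuckooStash
namespace CuckooStash

set_option linter.unusedSectionVars false
variable {V E : Type*} [Fintype V] [DecidableEq V] [Fintype E] [DecidableEq E]
variable {ends : E → V × V}

/-- Reachability in the multigraph restricted to `F`. -/
abbrev Reach (ends : E → V × V) (F : Finset E) (a b : V) : Prop :=
  Relation.EqvGen (adjOn ends F) a b

lemma rrefl (F : Finset E) (a : V) : Reach ends F a a := Relation.EqvGen.refl a

lemma rsymm {F : Finset E} {a b : V} (h : Reach ends F a b) : Reach ends F b a :=
  Relation.EqvGen.symm a b h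

lemma rtrans {F : Finset E} {a b c : V} (h1 : Reach ends F a b) (h2 : Reach ends F b c) :
    Reach ends F a c :=
  Relation.EqvGen.trans a b c h1 h2

lemma reach_mono {F F' : Finset E} (h : F ⊆ F') {a b : V} (hr : Reach ends F a b) :
    Reach ends F' a b :=
  Relation.EqvGen.mono (fun x y (hx : adjOn ends F x y) => show adjOn ends F' x y from by
    obtain ⟨e, he, h2⟩ := hx; exact ⟨e, h he, h2⟩) _ _ hr

lemma reach_of_ends {F : Finset E} {e : E} (he : e ∈ F) {p q : V}
    (hpq : ends e = (p, q) ∨ ends e = (q, p)) : Reach ends F p q :=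
  Relation.EqvGen.rel _ _ ⟨e, he, hpq⟩

lemma mem_compVerts {F : Finset E} {v u : V} :
    u ∈ compVerts ends F v ↔ Reach ends F v u := by
  classical
  simp [compVerts]

lemma mem_compEdges {F : Finset E} {v : V} {e : E} :
    e ∈ compEdges ends F v ↔ e ∈ F ∧ Reach ends F v (ends e).1 := by
  classical
  simp [compEdges]

end CuckooStash
namespace CuckooStash

set_option linter.unusedSectionVars false

variable {V E : Type*} [Fintype V] [DecidableEq V] [Fintype E] [DecidableEq E]
variable {ends : E → V × V}

/-- If `v` cannot reach `e`, then reachability from the component of `v` does not use `e`. -/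
lemma reach_erase_of_not_reach {F : Finset E} {e : E} (he : e ∈ F) {v : V}
    (hv : ¬ Reach ends F v (ends e).1) :
    ∀ a b : V, Reach ends F a b → Reach ends F v a → Reach ends (F.erase e) a b := by
  intro a b hab
  induction hab with
  | rel x y hxy =>
    intro hvx
    obtain ⟨f, hf, hends⟩ := hxy
    have hfe : f ≠ e := by
      rintro rfl
      apply hv
      rcases hends with h | h
      · rw [h]; exact hvx
      · rw [h]
        exact rtrans hvx (reach_of_ends hf (Or.inr h))
    exact Relation.EqvGen.rel _ _ ⟨f, Finset.mem_erase.2 ⟨hfe, hf⟩, hends⟩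
  | refl x => intro _; exact rrefl _ x
  | symm x y hxy ih =>
    intro hvy
    exact rsymm (ih (rtrans hvy (rsymm hxy)))
  | trans x y z hxy hyz ih1 ih2 =>
    intro hvx
    exact rtrans (ih1 hvx) (ih2 (rtrans hvx hxy))

lemma comp_erase_of_not_reach {F : Finset E} {e : E} (he : e ∈ F) {v : V}
    (hv : ¬ Reach ends F v (ends e).1) :
    compVerts ends (F.erase e) v = compVerts ends F v ∧
      compEdges ends (F.erase e) v = compEdges ends F v := by
  constructor
  · ext u
    simp only [mem_compVerts]
    exact ⟨reach_mono (Finset.erase_subset _ _),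
      fun h => reach_erase_of_not_reach he hv v u h (rrefl _ _)⟩
  · ext f
    simp only [mem_compEdges, Finset.mem_erase]
    constructor
    · rintro ⟨⟨_, hfF⟩, hr⟩
      exact ⟨hfF, reach_mono (Finset.erase_subset _ _) hr⟩
    · rintro ⟨hfF, hr⟩
      have hfe : f ≠ e := by
        rintro rfl; exact hv hr
      exact ⟨⟨hfe, hfF⟩, reach_erase_of_not_reach he hv v _ hr (rrefl _ _)⟩

/-- Removing an edge splits reachability into at most the components of `v`, `e.1`, `e.2`. -/
lemma reach_split {F : Finset E} {e : E} {a b : V} (hab : Reach ends F a b) :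
    Reach ends (F.erase e) a b ∨
      ((Reach ends (F.erase e) a (ends e).1 ∨ Reach ends (F.erase e) a (ends e).2) ∧
       (Reach ends (F.erase e) b (ends e).1 ∨ Reach ends (F.erase e) b (ends e).2)) := by
  induction hab with
  | rel x y hxy =>
    obtain ⟨f, hf, hends⟩ := hxy
    by_cases hfe : f = e
    · subst hfe
      right
      rcases hends with h | h
      · rw [h]
        exact ⟨Or.inl (rrefl _ _), Or.inr (rrefl _ _)⟩
      · rw [h]
        exact ⟨Or.inr (rrefl _ _), Or.inl (rrefl _ _)⟩
    · left
      exact Relation.EqvGen.rel _ _ ⟨f, Finset.mem_erase.2 ⟨hfe, hf⟩, hends⟩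
  | refl x => left; exact rrefl _ x
  | symm x y _ ih =>
    rcases ih with h | ⟨h1, h2⟩
    · exact Or.inl (rsymm h)
    · exact Or.inr ⟨h2, h1⟩
  | trans x y z _ _ ih1 ih2 =>
    rcases ih1 with h1 | ⟨ha, hb⟩
    · rcases ih2 with h2 | ⟨hb', hc⟩
      · exact Or.inl (rtrans h1 h2)
      · exact Or.inr ⟨hb'.imp (rtrans h1) (rtrans h1), hc⟩
    · rcases ih2 with h2 | ⟨_, hc⟩
      · exact Or.inr ⟨ha, hb.imp (rtrans (rsymm h2)) (rtrans (rsymm h2))⟩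
      · exact Or.inr ⟨ha, hc⟩

lemma compVerts_of_no_edges {F : Finset E} {v : V} (hE : compEdges ends F v = ∅) :
    compVerts ends F v = {v} := by
  have key : ∀ a b : V, Reach ends F a b → Reach ends F v a → a = b := by
    intro a b hab
    induction hab with
    | rel x y hxy =>
      intro hvx
      obtain ⟨f, hf, hends⟩ := hxy
      exfalso
      have : f ∈ compEdges ends F v := by
        rw [mem_compEdges]
        refine ⟨hf, ?_⟩
        rcases hends with h | h
        · rw [h]; exact hvx
        · rw [h]; exact rtrans hvx (reach_of_ends hf (Or.inr h))
      simp [hE] at this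
    | refl x => intro _; rfl
    | symm x y hxy ih =>
      intro hvy
      exact (ih (rtrans hvy (rsymm hxy))).symm
    | trans x y z hxy hyz ih1 ih2 =>
      intro hvx
      have h1 := ih1 hvx
      subst h1
      exact ih2 hvx
  ext u
  simp only [mem_compVerts, Finset.mem_singleton]
  exact ⟨fun h => (key v u h (rrefl _ _)).symm, fun h => h ▸ rrefl _ _⟩

end CuckooStash
namespace CuckooStash

set_option linter.unusedSectionVars false

variable {V E : Type*} [Fintype V] [DecidableEq V] [Fintype E] [DecidableEq E]
variable {ends : E → V × V}

/-- Case: after removing `e`, `v` still reaches both endpoints. -/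
lemma comp_erase_both {F : Finset E} {e : E} (he : e ∈ F) {v : V}
    (hb1 : Reach ends (F.erase e) v (ends e).1)
    (hb2 : Reach ends (F.erase e) v (ends e).2) :
    compVerts ends (F.erase e) v = compVerts ends F v ∧
      compEdges ends (F.erase e) v = (compEdges ends F v).erase e := by
  have conv : ∀ u : V, Reach ends F v u → Reach ends (F.erase e) v u := by
    intro u h
    rcases reach_split (e := e) h with h' | ⟨_, hu⟩
    · exact h'
    · rcases hu with hu | hu
      · exact rtrans hb1 (rsymm hu)
      · exact rtrans hb2 (rsymm hu)
  constructor
  · ext u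
    simp only [mem_compVerts]
    exact ⟨reach_mono (Finset.erase_subset _ _), conv u⟩
  · ext f
    simp only [mem_compEdges, Finset.mem_erase]
    constructor
    · rintro ⟨⟨hfe, hfF⟩, hr⟩
      exact ⟨hfe, hfF, reach_mono (Finset.erase_subset _ _) hr⟩
    · rintro ⟨hfe, hfF, hr⟩
      exact ⟨⟨hfe, hfF⟩, conv _ hr⟩

/-- Case: after removing `e`, `v` reaches endpoint `p` but not `q`: the component
splits into the piece of `v` and the piece of `q`, with `e` in between. -/
lemma comp_erase_pieces {F : Finset E} {e : E} (he : e ∈ F) {v p q : V}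
    (hpq : ends e = (p, q) ∨ ends e = (q, p))
    (hv1 : Reach ends F v (ends e).1)
    (hp : Reach ends (F.erase e) v p)
    (hq : ¬ Reach ends (F.erase e) v q) :
    compVerts ends F v = compVerts ends (F.erase e) v ∪ compVerts ends (F.erase e) q ∧
    Disjoint (compVerts ends (F.erase e) v) (compVerts ends (F.erase e) q) ∧
    compEdges ends F v = insert e (compEdges ends (F.erase e) v ∪ compEdges ends (F.erase e) q) ∧
    e ∉ compEdges ends (F.erase e) v ∪ compEdges ends (F.erase e) q ∧
    Disjoint (compEdges ends (F.erase e) v) (compEdges ends (F.erase e) q) := by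
  have hvq : Reach ends F v q := by
    rcases hpq with h | h
    · exact rtrans (reach_mono (Finset.erase_subset _ _) hp) (reach_of_ends he (Or.inl h))
    · exact rtrans (reach_mono (Finset.erase_subset _ _) hp) (rsymm (reach_of_ends he (Or.inl h)))
  -- erase-reach to an endpoint of e implies erase-reach to p or q
  have hep : ∀ u : V, (Reach ends (F.erase e) u (ends e).1 ∨ Reach ends (F.erase e) u (ends e).2) →
      Reach ends (F.erase e) u p ∨ Reach ends (F.erase e) u q := by
    intro u h
    rcases hpq with hh | hh <;> rw [hh] at h
    · exact h
    · exact h.symm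
  have conv : ∀ u : V, Reach ends F v u →
      Reach ends (F.erase e) v u ∨ Reach ends (F.erase e) q u := by
    intro u h
    rcases reach_split (e := e) h with h' | ⟨_, hu⟩
    · exact Or.inl h'
    · rcases hep u hu with hu' | hu'
      · exact Or.inl (rtrans hp (rsymm hu'))
      · exact Or.inr (rsymm hu')
  have hdisj : ∀ u : V, Reach ends (F.erase e) v u → Reach ends (F.erase e) q u → False := by
    intro u h1 h2
    exact hq (rtrans h1 (rsymm h2))
  refine ⟨?_, ?_, ?_, ?_, ?_⟩
  · ext u
    simp only [mem_compVerts, Finset.mem_union]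
    constructor
    · exact conv u
    · rintro (h | h)
      · exact reach_mono (Finset.erase_subset _ _) h
      · exact rtrans hvq (reach_mono (Finset.erase_subset _ _) h)
  · rw [Finset.disjoint_left]
    intro u h1 h2
    rw [mem_compVerts] at h1 h2
    exact hdisj u h1 h2
  · ext f
    simp only [mem_compEdges, Finset.mem_insert, Finset.mem_union, Finset.mem_erase]
    constructor
    · rintro ⟨hfF, hr⟩
      by_cases hfe : f = e
      · exact Or.inl hfe
      · right
        rcases conv _ hr with h | h
        · exact Or.inl ⟨⟨hfe, hfF⟩, h⟩
        · exact Or.inr ⟨⟨hfe, hfF⟩, h⟩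
    · rintro (rfl | ⟨⟨hfe, hfF⟩, hr⟩ | ⟨⟨hfe, hfF⟩, hr⟩)
      · exact ⟨he, hv1⟩
      · exact ⟨hfF, reach_mono (Finset.erase_subset _ _) hr⟩
      · exact ⟨hfF, rtrans hvq (reach_mono (Finset.erase_subset _ _) hr)⟩
  · simp only [Finset.mem_union, mem_compEdges, Finset.mem_erase]
    rintro (⟨⟨hfe, _⟩, _⟩ | ⟨⟨hfe, _⟩, _⟩) <;> exact hfe rfl
  · rw [Finset.disjoint_left]
    intro f h1 h2
    rw [mem_compEdges] at h1 h2
    exact hdisj _ h1.2 h2.2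

/-- Removing an edge of `v`'s component: either `v` still reaches both endpoints,
or exactly one (in the `p`/`q` configuration). -/
lemma erase_cases {F : Finset E} {e : E} (he : e ∈ F) {v : V}
    (hv1 : Reach ends F v (ends e).1) :
    (Reach ends (F.erase e) v (ends e).1 ∧ Reach ends (F.erase e) v (ends e).2) ∨
    (Reach ends (F.erase e) v (ends e).1 ∧ ¬ Reach ends (F.erase e) v (ends e).2) ∨
    (Reach ends (F.erase e) v (ends e).2 ∧ ¬ Reach ends (F.erase e) v (ends e).1) := by
  by_cases h1 : Reach ends (F.erase e) v (ends e).1 <;>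
    by_cases h2 : Reach ends (F.erase e) v (ends e).2
  · exact Or.inl ⟨h1, h2⟩
  · exact Or.inr (Or.inl ⟨h1, h2⟩)
  · exact Or.inr (Or.inr ⟨h2, h1⟩)
  · exfalso
    rcases reach_split (e := e) hv1 with h | ⟨hu, _⟩
    · exact h1 h
    · rcases hu with h | h
      · exact h1 h
      · exact h2 h

end CuckooStash
namespace CuckooStash

set_option linter.unusedSectionVars false
set_option linter.unusedVariables false

variable {V E : Type*} [Fintype V] [DecidableEq V] [Fintype E] [DecidableEq E]
variable {ends : E → V × V}

/-- A connected component has at most one more vertex than edges. -/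
lemma conn_bound (F : Finset E) :
    ∀ v : V, (compVerts ends F v).card ≤ (compEdges ends F v).card + 1 := by
  induction F using Finset.strongInduction with
  | _ F ih =>
    intro v
    by_cases hE : compEdges ends F v = ∅
    · rw [compVerts_of_no_edges hE, hE]
      simp
    · obtain ⟨e, he⟩ := Finset.nonempty_iff_ne_empty.2 hE
      obtain ⟨heF, hv1⟩ := mem_compEdges.1 he
      have hss : F.erase e ⊂ F := Finset.erase_ssubset heF
      have IH := ih (F.erase e) hss
      rcases erase_cases heF hv1 with ⟨hb1, hb2⟩ | ⟨hp, hq⟩ | ⟨hp, hq⟩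
      · obtain ⟨hV, hEq⟩ := comp_erase_both heF hb1 hb2
        have hcard : (compEdges ends (F.erase e) v).card + 1 = (compEdges ends F v).card := by
          rw [hEq]; exact Finset.card_erase_add_one he
        have hVc := congrArg Finset.card hV
        have := IH v
        omega
      · obtain ⟨hV, hVd, hEq, heU, hEd⟩ :=
          comp_erase_pieces (p := (ends e).1) (q := (ends e).2) heF (Or.inl rfl) hv1 hp hq
        have h1 := IH v
        have h2 := IH (ends e).2
        have hVc : (compVerts ends F v).card =
            (compVerts ends (F.erase e) v).card + (compVerts ends (F.erase e) (ends e).2).card := by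
          rw [hV, Finset.card_union_of_disjoint hVd]
        have hEc : (compEdges ends F v).card =
            (compEdges ends (F.erase e) v).card + (compEdges ends (F.erase e) (ends e).2).card + 1 := by
          rw [hEq, Finset.card_insert_of_notMem heU, Finset.card_union_of_disjoint hEd]
        omega
      · obtain ⟨hV, hVd, hEq, heU, hEd⟩ :=
          comp_erase_pieces (p := (ends e).2) (q := (ends e).1) heF (Or.inr rfl) hv1 hp hq
        have h1 := IH v
        have h2 := IH (ends e).1
        have hVc : (compVerts ends F v).card =
            (compVerts ends (F.erase e) v).card + (compVerts ends (F.erase e) (ends e).1).card := by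
          rw [hV, Finset.card_union_of_disjoint hVd]
        have hEc : (compEdges ends F v).card =
            (compEdges ends (F.erase e) v).card + (compEdges ends (F.erase e) (ends e).1).card + 1 := by
          rw [hEq, Finset.card_insert_of_notMem heU, Finset.card_union_of_disjoint hEd]
        omega

/-- Removing an edge preserves `GoodComponents`. -/
lemma good_erase {F : Finset E} (hg : GoodComponents ends F) {e : E} (he : e ∈ F) :
    GoodComponents ends (F.erase e) := by
  intro v
  by_cases hv1 : Reach ends F v (ends e).1
  · have hgv := hg v
    have hconn := conn_bound (ends := ends) (F.erase e)
    rcases erase_cases he hv1 with ⟨hb1, hb2⟩ | ⟨hp, hq⟩ | ⟨hp, hq⟩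
    · obtain ⟨hV, hEq⟩ := comp_erase_both he hb1 hb2
      have hcard : (compEdges ends (F.erase e) v).card + 1 = (compEdges ends F v).card := by
        rw [hEq]
        exact Finset.card_erase_add_one (mem_compEdges.2 ⟨he, hv1⟩)
      rw [hV]
      omega
    · obtain ⟨hV, hVd, hEq, heU, hEd⟩ := comp_erase_pieces (p := (ends e).1) (q := (ends e).2) he (Or.inl rfl) hv1 hp hq
      have hVc : (compVerts ends F v).card =
          (compVerts ends (F.erase e) v).card + (compVerts ends (F.erase e) (ends e).2).card := by
        rw [hV, Finset.card_union_of_disjoint hVd]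
      have hEc : (compEdges ends F v).card =
          (compEdges ends (F.erase e) v).card + (compEdges ends (F.erase e) (ends e).2).card + 1 := by
        rw [hEq, Finset.card_insert_of_notMem heU, Finset.card_union_of_disjoint hEd]
      have h2 := hconn (ends e).2
      omega
    · obtain ⟨hV, hVd, hEq, heU, hEd⟩ := comp_erase_pieces (p := (ends e).2) (q := (ends e).1) he (Or.inr rfl) hv1 hp hq
      have hVc : (compVerts ends F v).card =
          (compVerts ends (F.erase e) v).card + (compVerts ends (F.erase e) (ends e).1).card := by
        rw [hV, Finset.card_union_of_disjoint hVd]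
      have hEc : (compEdges ends F v).card =
          (compEdges ends (F.erase e) v).card + (compEdges ends (F.erase e) (ends e).1).card + 1 := by
        rw [hEq, Finset.card_insert_of_notMem heU, Finset.card_union_of_disjoint hEd]
      have h2 := hconn (ends e).1
      omega
  · obtain ⟨hV, hEq⟩ := comp_erase_of_not_reach he hv1
    rw [hV, hEq]
    exact hg v

/-- `GoodComponents` is hereditary. -/
lemma good_subset {F : Finset E} (hg : GoodComponents ends F) :
    ∀ F' ⊆ F, GoodComponents ends F' := by
  induction F using Finset.strongInduction with
  | _ F ih =>
    intro F' hsub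
    by_cases h : F' = F
    · subst h; exact hg
    · obtain ⟨e, heF, heF'⟩ := Finset.exists_of_ssubset (hsub.ssubset_of_ne h)
      exact ih (F.erase e) (Finset.erase_ssubset heF) (good_erase hg heF) F'
        (fun x hx => Finset.mem_erase.2 ⟨fun hxe => heF' (hxe ▸ hx), hsub hx⟩)

end CuckooStash
namespace CuckooStash

set_option linter.unusedSectionVars false
set_option linter.unusedVariables false

variable {V E : Type*} [Fintype V] [DecidableEq V] [Fintype E] [DecidableEq E]
variable {ends : E → V × V}

/-- The set of endpoints of the edges in `A`. -/
def support (ends : E → V × V) (A : Finset E) : Finset V :=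
  A.biUnion (fun e => {(ends e).1, (ends e).2})

lemma mem_support {A : Finset E} {u : V} :
    u ∈ support ends A ↔ ∃ e ∈ A, u = (ends e).1 ∨ u = (ends e).2 := by
  simp [support]

lemma reach_support {A : Finset E} {a b : V} (h : Reach ends A a b) :
    a = b ∨ (a ∈ support ends A ∧ b ∈ support ends A) := by
  induction h with
  | rel x y hxy =>
    obtain ⟨f, hf, hends⟩ := hxy
    right
    constructor <;> rw [mem_support] <;> refine ⟨f, hf, ?_⟩
    · rcases hends with h | h <;> rw [h] <;> simp
    · rcases hends with h | h <;> rw [h] <;> simp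
  | refl x => exact Or.inl rfl
  | symm x y _ ih => rcases ih with h | ⟨h1, h2⟩; exacts [Or.inl h.symm, Or.inr ⟨h2, h1⟩]
  | trans x y z _ _ ih1 ih2 =>
    rcases ih1 with h | ⟨h1, h2⟩
    · rw [h]; exact ih2
    · rcases ih2 with h | ⟨h3, h4⟩
      · exact Or.inr ⟨h1, h ▸ h2⟩
      · exact Or.inr ⟨h1, h4⟩

/-- A good edge set has at least as many endpoint vertices as edges. -/
lemma card_le_support (A : Finset E) (hg : GoodComponents ends A) :
    A.card ≤ (support ends A).card := by
  induction A using Finset.strongInduction with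
  | _ A ih =>
    rcases Finset.eq_empty_or_nonempty A with rfl | ⟨e, he⟩
    · simp
    · set v := (ends e).1 with hv
      set P := compEdges ends A v with hP
      have heP : e ∈ P := mem_compEdges.2 ⟨he, rrefl _ _⟩
      have hPA : P ⊆ A := fun f hf => (mem_compEdges.1 hf).1
      set Q := A \ P with hQdef
      have hQA : Q ⊆ A := Finset.sdiff_subset
      have hQss : Q ⊂ A := Finset.ssubset_iff_of_subset hQA |>.2
        ⟨e, he, by simp [hQdef, heP]⟩
      have hQgood : GoodComponents ends Q := good_subset hg Q hQA
      have hIH := ih Q hQss hQgood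
      -- compVerts of v is inside the support of A
      have hCV : compVerts ends A v ⊆ support ends A := by
        intro u hu
        rcases reach_support (mem_compVerts.1 hu) with h | ⟨_, h2⟩
        · rw [← h, mem_support]
          exact ⟨e, he, Or.inl rfl⟩
        · exact h2
      -- support of Q is inside the support of A
      have hSQ : support ends Q ⊆ support ends A := by
        intro u hu
        rw [mem_support] at hu ⊢
        obtain ⟨f, hf, h⟩ := hu
        exact ⟨f, hQA hf, h⟩
      -- and they are disjoint
      have hdisj : Disjoint (compVerts ends A v) (support ends Q) := by
        rw [Finset.disjoint_left]
        intro u hu1 hu2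
        rw [mem_compVerts] at hu1
        rw [mem_support] at hu2
        obtain ⟨f, hf, h⟩ := hu2
        have hfA : f ∈ A := hQA hf
        have : f ∈ P := by
          rw [hP, mem_compEdges]
          refine ⟨hfA, ?_⟩
          rcases h with rfl | rfl
          · exact hu1
          · exact rtrans hu1 (rsymm (reach_of_ends hfA (Or.inl rfl)))
        simp [hQdef, this] at hf
      have hunion : compVerts ends A v ∪ support ends Q ⊆ support ends A :=
        Finset.union_subset hCV hSQ
      have hcard1 : (compVerts ends A v).card + (support ends Q).card ≤ (support ends A).card := by
        rw [← Finset.card_union_of_disjoint hdisj]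
        exact Finset.card_le_card hunion
      have hPcard : P.card ≤ (compVerts ends A v).card := hg v
      have hAcard : A.card = P.card + Q.card := by
        rw [hQdef, Finset.card_sdiff_of_subset hPA]
        have := Finset.card_le_card hPA
        omega
      omega

/-- Existence of an injective assignment of edges to incident vertices. -/
lemma exists_assignment (F : Finset E) (hg : GoodComponents ends F) :
    ∃ f : E → V, Set.InjOn f ↑F ∧ ∀ e ∈ F, f e = (ends e).1 ∨ f e = (ends e).2 := by
  have hall : ∀ s : Finset {e // e ∈ F},
      s.card ≤ (s.biUnion (fun e => ({(ends e.1).1, (ends e.1).2} : Finset V))).card := by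
    intro s
    set A := s.image Subtype.val with hA
    have hAF : A ⊆ F := by
      intro x hx
      obtain ⟨⟨y, hy⟩, _, rfl⟩ := Finset.mem_image.1 hx
      exact hy
    have hcard : A.card = s.card := Finset.card_image_of_injective _ Subtype.val_injective
    have hbi : s.biUnion (fun e => ({(ends e.1).1, (ends e.1).2} : Finset V)) = support ends A := by
      ext u
      simp only [Finset.mem_biUnion, mem_support, hA, Finset.mem_image]
      constructor
      · rintro ⟨i, hi, hu⟩
        simp only [Finset.mem_insert, Finset.mem_singleton] at hu
        exact ⟨i.1, ⟨i, hi, rfl⟩, hu⟩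
      · rintro ⟨x, ⟨i, hi, rfl⟩, hu⟩
        refine ⟨i, hi, ?_⟩
        simp only [Finset.mem_insert, Finset.mem_singleton]
        exact hu
    rw [hbi, ← hcard]
    exact card_le_support A (good_subset hg A hAF)
  obtain ⟨g, hginj, hgmem⟩ := (Finset.all_card_le_biUnion_card_iff_exists_injective _).1 hall
  classical
  refine ⟨fun e => if h : e ∈ F then g ⟨e, h⟩ else (ends e).1, ?_, ?_⟩
  · intro x hx y hy hxy
    simp only [Finset.mem_coe] at hx hy
    simp only at hxy
    rw [dif_pos hx, dif_pos hy] at hxy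
    have := hginj hxy
    exact congrArg Subtype.val this
  · intro e he
    simp only
    rw [dif_pos he]
    have := hgmem ⟨e, he⟩
    simp only [Finset.mem_insert, Finset.mem_singleton] at this
    exact this

lemma goodComponents_empty : GoodComponents ends (∅ : Finset E) := by
  intro v
  have : compEdges ends (∅ : Finset E) v = ∅ := by
    ext f
    simp [mem_compEdges]
  simp [this]

end CuckooStash
open CuckooStash

/-- The keys of `S = Fin n` can be stored in the two tables (each a copy of `Fin m`)
with a stash of size `s`, i.e. all but at most `s` keys can be injectively assigned
to one of their two endpoints `h₁ x` (left table) or `h₂ x` (right table), if and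
only if the excess of the cuckoo graph `G(S,h₁,h₂)` is at most `s`. -/
theorem stmt_7 (m n s : ℕ) (h₁ h₂ : Fin n → Fin m) :
    (∃ T : Finset (Fin n), T.card ≤ s ∧
        ∃ f : Fin n → Fin m ⊕ Fin m,
          (∀ x, x ∉ T → f x = Sum.inl (h₁ x) ∨ f x = Sum.inr (h₂ x)) ∧
          Set.InjOn f {x | x ∉ T}) ↔
      excess (fun x : Fin n =>
          ((Sum.inl (h₁ x) : Fin m ⊕ Fin m), (Sum.inr (h₂ x) : Fin m ⊕ Fin m)))
        Finset.univ ≤ s := by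
  set ends : Fin n → (Fin m ⊕ Fin m) × (Fin m ⊕ Fin m) :=
    fun x => (Sum.inl (h₁ x), Sum.inr (h₂ x)) with hends
  set S : Set ℕ := {d : ℕ | ∃ F' ⊆ (Finset.univ : Finset (Fin n)),
      F'.card + d = (Finset.univ : Finset (Fin n)).card ∧ GoodComponents ends F'} with hS
  have hexS : excess ends Finset.univ = sInf S := rfl
  constructor
  · rintro ⟨T, hT, f, hf, hinj⟩
    set F' : Finset (Fin n) := Finset.univ \ T with hF'
    have hmem : ∀ x, x ∈ F' ↔ x ∉ T := by simp [hF']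
    have hgood : GoodComponents ends F' := by
      intro v
      apply Finset.card_le_card_of_injOn f
      · intro x hx
        obtain ⟨hxF, hr⟩ := mem_compEdges.1 hx
        rw [Finset.mem_coe, mem_compVerts]
        rcases hf x ((hmem x).1 hxF) with h | h
        · rw [h]; exact hr
        · rw [h]
          exact rtrans hr (reach_of_ends hxF (Or.inl rfl))
      · intro x hx y hy hxy
        exact hinj ((hmem x).1 (mem_compEdges.1 (Finset.mem_coe.1 hx)).1)
          ((hmem y).1 (mem_compEdges.1 (Finset.mem_coe.1 hy)).1) hxy
    have hmemS : T.card ∈ S := by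
      refine ⟨F', Finset.subset_univ _, ?_, hgood⟩
      rw [hF', Finset.card_sdiff_of_subset (Finset.subset_univ T)]
      have := Finset.card_le_card (Finset.subset_univ T)
      omega
    rw [hexS]
    exact le_trans (Nat.sInf_le hmemS) hT
  · intro hex
    have hne : S.Nonempty :=
      ⟨(Finset.univ : Finset (Fin n)).card,
        ∅, Finset.empty_subset _, by simp, goodComponents_empty⟩
    have hmem : sInf S ∈ S := Nat.sInf_mem hne
    obtain ⟨F', hsub, hcard, hgood⟩ := hmem
    obtain ⟨f, hinj, hf⟩ := exists_assignment F' hgood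
    rw [hexS] at hex
    refine ⟨Finset.univ \ F', ?_, f, ?_, ?_⟩
    · rw [Finset.card_sdiff_of_subset hsub]
      have := Finset.card_le_card hsub
      omega
    · intro x hx
      have hxF : x ∈ F' := by simpa using hx
      exact hf x hxF
    · intro x hx y hy hxy
      have hxF : x ∈ F' := by simpa using hx
      have hyF : y ∈ F' := by simpa using hy
      exact hinj hxF hyF hxy
end

section
/- Every leafless connected graph with i marked edges has a leafless connected subgraph containing all i marked edges whose cyclomatic number is at most i + 1. -/
open CuckooStash
namespace StashAux
set_option linter.unusedSectionVars false
set_option linter.unreachableTactic false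
set_option linter.unusedTactic false

open Relation Finset

variable {V E : Type*} [Fintype V] [DecidableEq V] [Fintype E] [DecidableEq E]
variable (ends : E → V × V)

/-- incidence count of edge `g` at vertex `w` (a loop counts twice). -/
def inc (g : E) (w : V) : ℕ :=
  (if (ends g).1 = w then 1 else 0) + (if (ends g).2 = w then 1 else 0)

lemma deg_eq_sum (F : Finset E) (w : V) :
    deg ends F w = ∑ g ∈ F, inc ends g w := by
  classical
  unfold CuckooStash.deg inc
  rw [Finset.card_filter, Finset.card_filter, ← Finset.sum_add_distrib]

variable {ends}

lemma inc_ne_zero_iff {g : E} {w : V} :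
    inc ends g w ≠ 0 ↔ (ends g).1 = w ∨ (ends g).2 = w := by
  unfold inc
  split <;> split <;> simp_all

lemma inc_le_one {g : E} {w : V} (h : (ends g).1 ≠ (ends g).2) :
    inc ends g w ≤ 1 := by
  unfold inc
  split <;> split <;> simp_all <;> omega

lemma inc_fst_ne_zero (g : E) : inc ends g (ends g).1 ≠ 0 := by
  simp [inc]

lemma inc_snd_ne_zero (g : E) : inc ends g (ends g).2 ≠ 0 := by
  simp [inc]

lemma inc_eq_zero {g : E} {w : V} (h1 : (ends g).1 ≠ w) (h2 : (ends g).2 ≠ w) :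
    inc ends g w = 0 := by
  simp [inc, h1, h2]

lemma inc_eq_one {g : E} {a b : V} (hg : ends g = (a, b) ∨ ends g = (b, a))
    (hab : a ≠ b) : inc ends g a = 1 := by
  rcases hg with h | h <;> simp [inc, h, hab, hab.symm] <;> omega

lemma deg_mono {F F' : Finset E} (h : F ⊆ F') (w : V) :
    deg ends F w ≤ deg ends F' w := by
  rw [deg_eq_sum, deg_eq_sum]
  exact Finset.sum_le_sum_of_subset h

lemma deg_union {F A : Finset E} (h : Disjoint F A) (w : V) :
    deg ends (F ∪ A) w = deg ends F w + deg ends A w := by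
  rw [deg_eq_sum, deg_eq_sum, deg_eq_sum]
  exact Finset.sum_union h

lemma deg_insert {g : E} {F : Finset E} (h : g ∉ F) (w : V) :
    deg ends (insert g F) w = inc ends g w + deg ends F w := by
  rw [deg_eq_sum, deg_eq_sum]
  exact Finset.sum_insert h

lemma deg_singleton (g : E) (w : V) : deg ends {g} w = inc ends g w := by
  rw [deg_eq_sum, Finset.sum_singleton]

lemma deg_empty (w : V) : deg ends (∅ : Finset E) w = 0 := by
  rw [deg_eq_sum, Finset.sum_empty]

lemma deg_ne_zero_of_mem {g : E} {F : Finset E} {w : V} (hg : g ∈ F)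
    (h : inc ends g w ≠ 0) : deg ends F w ≠ 0 := by
  rw [deg_eq_sum]
  intro h0
  exact h (Finset.sum_eq_zero_iff.mp h0 g hg)

lemma exists_inc_of_deg_ne_zero {F : Finset E} {w : V} (h : deg ends F w ≠ 0) :
    ∃ g ∈ F, inc ends g w ≠ 0 := by
  rw [deg_eq_sum] at h
  by_contra hc
  push_neg at hc
  exact h (Finset.sum_eq_zero hc)

lemma deg_eq_zero_of_subset {F : Finset E} {A : Finset E} {w : V} (hsub : A ⊆ F)
    (h : deg ends F w = 0) : deg ends A w = 0 :=
  Nat.le_zero.mp (h ▸ deg_mono hsub w)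

/- ### adjacency basics -/

lemma adjOn_symm {F : Finset E} {a b : V} (h : adjOn ends F a b) : adjOn ends F b a := by
  obtain ⟨g, hg, hor⟩ := h
  exact ⟨g, hg, hor.symm⟩

lemma adjOn_mono {F F' : Finset E} (h : F ⊆ F') {a b : V} (had : adjOn ends F a b) :
    adjOn ends F' a b := by
  obtain ⟨g, hg, hor⟩ := had
  exact ⟨g, h hg, hor⟩

lemma adjOn_of_mem {F : Finset E} {g : E} {a b : V} (hg : g ∈ F)
    (hor : ends g = (a, b) ∨ ends g = (b, a)) : adjOn ends F a b :=
  ⟨g, hg, hor⟩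

lemma deg_ne_zero_of_adj {F : Finset E} {a b : V} (h : adjOn ends F a b) :
    deg ends F a ≠ 0 := by
  obtain ⟨g, hg, hor⟩ := h
  refine deg_ne_zero_of_mem hg ?_
  rw [inc_ne_zero_iff]
  rcases hor with h | h <;> simp [h]

/- ### EqvGen ↔ ReflTransGen -/

lemma rt_symm {F : Finset E} {a b : V} (h : ReflTransGen (adjOn ends F) a b) :
    ReflTransGen (adjOn ends F) b a :=
  by haveI : Std.Symm (adjOn ends F) := ⟨fun _ _ hxy => adjOn_symm hxy⟩; exact Std.Symm.symm _ _ h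

lemma eqvGen_iff_rt {F : Finset E} {a b : V} :
    Relation.EqvGen (adjOn ends F) a b ↔ ReflTransGen (adjOn ends F) a b := by
  constructor
  · intro h
    induction h with
    | rel x y hxy => exact ReflTransGen.single hxy
    | refl x => exact ReflTransGen.refl
    | symm x y _ ih => exact rt_symm ih
    | trans x y z _ _ ih1 ih2 => exact ih1.trans ih2
  · intro h
    induction h with
    | refl => exact EqvGen.refl _
    | tail _ hxy ih => exact EqvGen.trans _ _ _ ih (EqvGen.rel _ _ hxy)

lemma rt_mono {F F' : Finset E} (h : F ⊆ F') {a b : V}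
    (hr : ReflTransGen (adjOn ends F) a b) : ReflTransGen (adjOn ends F') a b :=
  ReflTransGen.mono (fun _ _ hxy => adjOn_mono h hxy) _ _ hr

lemma rt_eq_of_deg_zero {F : Finset E} {a b : V} (h0 : deg ends F a = 0)
    (h : ReflTransGen (adjOn ends F) a b) : b = a := by
  rcases (ReflTransGen.cases_head h) with h | ⟨c, hac, _⟩
  · exact h.symm
  · exact absurd (deg_ne_zero_of_adj hac) (by simp [h0])

lemma not_eqvGen_of_deg_zero {F : Finset E} {a b : V} (hne : a ≠ b)
    (h0 : deg ends F b = 0) : ¬ Relation.EqvGen (adjOn ends F) a b := by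
  intro h
  have hrt := rt_symm (eqvGen_iff_rt.mp h)
  exact hne (rt_eq_of_deg_zero h0 hrt)

end StashAux

namespace StashAux

variable {V E : Type*} [Fintype V] [DecidableEq V] [Fintype E] [DecidableEq E]
variable {ends : E → V × V}

open Relation Finset

/-- the canonical projection between component quotients for `F ⊆ F'`. -/
noncomputable def zmap (ends : E → V × V) {F F' : Finset E} (h : F ⊆ F') :
    Quotient (compSetoid ends F) → Quotient (compSetoid ends F') :=
  fun q => Quotient.liftOn q (fun v => Quotient.mk (compSetoid ends F') v)
    (fun a b hab => Quotient.sound (Relation.EqvGen.mono (fun x y hxy => adjOn_mono h hxy) _ _ hab))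

lemma zmap_mk (ends : E → V × V) {F F' : Finset E} (h : F ⊆ F') (v : V) :
    zmap ends h (Quotient.mk (compSetoid ends F) v) = Quotient.mk (compSetoid ends F') v := rfl

lemma zmap_surjective (ends : E → V × V) {F F' : Finset E} (h : F ⊆ F') :
    Function.Surjective (zmap ends h) := by
  intro q
  induction q using Quotient.ind with
  | _ v => exact ⟨Quotient.mk _ v, rfl⟩

lemma zeta_le_cardV (ends : E → V × V) (F : Finset E) :
    zeta ends F ≤ Fintype.card V := by
  have : Nat.card (Quotient (compSetoid ends F)) ≤ Nat.card V :=
    Nat.card_le_card_of_surjective (Quotient.mk _) (fun q => ⟨q.out, Quotient.out_eq q⟩)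
  simpa [zeta, Nat.card_eq_fintype_card] using this

lemma zeta_mono {F F' : Finset E} (h : F ⊆ F') : zeta ends F' ≤ zeta ends F :=
  Nat.card_le_card_of_surjective (zmap ends h) (zmap_surjective ends h)

lemma eqv_of_mem_insert {F : Finset E} (g : E) :
    Relation.EqvGen (adjOn ends (insert g F)) (ends g).1 (ends g).2 :=
  Relation.EqvGen.rel _ _ ⟨g, Finset.mem_insert_self g F, Or.inl rfl⟩

lemma zeta_insert_lt {F : Finset E} {g : E}
    (h : ¬ Relation.EqvGen (adjOn ends F) (ends g).1 (ends g).2) :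
    zeta ends (insert g F) < zeta ends F := by
  haveI : Fintype (Quotient (compSetoid ends (insert g F))) := Fintype.ofFinite _
  haveI : Fintype (Quotient (compSetoid ends F)) := Fintype.ofFinite _
  have hsub : F ⊆ insert g F := Finset.subset_insert g F
  have hne : (Quotient.mk (compSetoid ends F) (ends g).1) ≠
      (Quotient.mk (compSetoid ends F) (ends g).2) := by
    intro hq
    exact h (Quotient.exact hq)
  have hnotinj : ¬ Function.Injective (zmap ends hsub) := by
    intro hinj
    refine hne (hinj ?_)
    rw [zmap_mk, zmap_mk]
    exact Quotient.sound (eqv_of_mem_insert g)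
  have := Fintype.card_lt_of_surjective_not_injective (zmap ends hsub)
    (zmap_surjective ends hsub) hnotinj
  simpa [zeta, Nat.card_eq_fintype_card] using this

/-- version taking the edge's endpoints in either orientation -/
lemma zeta_insert_lt' {F : Finset E} {g : E} {a b : V}
    (hor : ends g = (a, b) ∨ ends g = (b, a))
    (h : ¬ Relation.EqvGen (adjOn ends F) a b) :
    zeta ends (insert g F) < zeta ends F := by
  refine zeta_insert_lt ?_
  rcases hor with he | he <;> rw [he] <;> simp only
  · exact h
  · intro hba
    exact h (Relation.EqvGen.symm _ _ hba)

end StashAux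

namespace StashAux
set_option linter.unusedSectionVars false

variable {V E : Type*} [Fintype V] [DecidableEq V] [Fintype E] [DecidableEq E]
variable {ends : E → V × V}

open Relation Finset

/-- `x` can reach the support of `F` while avoiding the edge `e`. -/
def Reach (ends : E → V × V) (e : E) (F : Finset E) (x : V) : Prop :=
  ∃ s, deg ends F s ≠ 0 ∧ ReflTransGen (adjOn ends (Finset.univ.erase e)) x s

lemma reach_self {e : E} {F : Finset E} {s : V} (hs : deg ends F s ≠ 0) :
    Reach ends e F s := ⟨s, hs, ReflTransGen.refl⟩

lemma reach_mono {e : E} {F F' : Finset E} (h : F ⊆ F') {x : V}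
    (hr : Reach ends e F x) : Reach ends e F' x := by
  obtain ⟨s, hs, hrt⟩ := hr
  exact ⟨s, fun h0 => hs (Nat.le_zero.mp (h0 ▸ deg_mono h s)), hrt⟩

lemma reach_of_adj {e : E} {F : Finset E} {x y : V}
    (hadj : adjOn ends (Finset.univ.erase e) x y) (hr : Reach ends e F y) :
    Reach ends e F x := by
  obtain ⟨s, hs, hrt⟩ := hr
  exact ⟨s, hs, ReflTransGen.head hadj hrt⟩

lemma reach_of_rt {e : E} {F : Finset E} {x y : V}
    (hrt : ReflTransGen (adjOn ends (Finset.univ.erase e)) x y)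
    (hr : Reach ends e F y) : Reach ends e F x := by
  obtain ⟨s, hs, hrt'⟩ := hr
  exact ⟨s, hs, hrt.trans hrt'⟩

lemma deg_zero_of_not_reach {e : E} {F : Finset E} {w : V}
    (h : ¬ Reach ends e F w) : deg ends F w = 0 := by
  by_contra h0
  exact h (reach_self h0)

/-- Walking in the full graph, one either avoids `e` entirely or can avoid `e`
up to the first endpoint of `e` encountered. -/
lemma dich_aux {e : E} {s w : V}
    (h : ReflTransGen (adjOn ends Finset.univ) s w) :
    ReflTransGen (adjOn ends (Finset.univ.erase e)) s w ∨
    ReflTransGen (adjOn ends (Finset.univ.erase e)) s (ends e).1 ∨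
    ReflTransGen (adjOn ends (Finset.univ.erase e)) s (ends e).2 := by
  induction h with
  | refl => exact Or.inl ReflTransGen.refl
  | tail hsw' hadj ih =>
    rcases ih with ih | ih | ih
    · obtain ⟨g, _, hor⟩ := hadj
      by_cases hge : g = e
      · subst hge
        rcases hor with hge' | hge'
        · exact Or.inr (Or.inl (by rw [hge']; exact ih))
        · exact Or.inr (Or.inr (by rw [hge']; exact ih))
      · exact Or.inl (ih.tail ⟨g, Finset.mem_erase.mpr ⟨hge, Finset.mem_univ g⟩, hor⟩)
    · exact Or.inr (Or.inl ih)
    · exact Or.inr (Or.inr ih)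

/-- If `F` is nonempty, some endpoint of `e` reaches the support of `F` avoiding `e`. -/
lemma reach_endpoint
    (hconn : ∀ u v : V, deg ends Finset.univ u ≠ 0 → deg ends Finset.univ v ≠ 0 →
      Relation.EqvGen (adjOn ends Finset.univ) u v)
    {e : E} {F : Finset E} (hF : F.Nonempty) :
    Reach ends e F (ends e).1 ∨ Reach ends e F (ends e).2 := by
  obtain ⟨g, hg⟩ := hF
  set s := (ends g).1 with hs_def
  have hsF : deg ends F s ≠ 0 := deg_ne_zero_of_mem hg (inc_fst_ne_zero g)
  have hsu : deg ends Finset.univ s ≠ 0 :=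
    deg_ne_zero_of_mem (Finset.mem_univ g) (inc_fst_ne_zero g)
  have huu : deg ends Finset.univ (ends e).1 ≠ 0 :=
    deg_ne_zero_of_mem (Finset.mem_univ e) (inc_fst_ne_zero e)
  have h := eqvGen_iff_rt.mp (hconn s (ends e).1 hsu huu)
  rcases dich_aux (e := e) h with h' | h' | h'
  · exact Or.inl ⟨s, hsF, rt_symm h'⟩
  · exact Or.inl ⟨s, hsF, rt_symm h'⟩
  · exact Or.inr ⟨s, hsF, rt_symm h'⟩

/-- Separation: a walk starting in the `B`-part of `A ∪ B` whose supports are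
disjoint stays in the `B`-part. -/
lemma sep_stay {A B : Finset E} {u w : V}
    (hdisj : ∀ x, deg ends A x ≠ 0 → deg ends B x ≠ 0 → False)
    (huA : deg ends A u = 0)
    (h : ReflTransGen (adjOn ends (A ∪ B)) u w) :
    w = u ∨ (deg ends B w ≠ 0 ∧ deg ends A w = 0) := by
  induction h with
  | refl => exact Or.inl rfl
  | @tail p w' hup hadj ih =>
    have hpA : deg ends A p = 0 := by
      rcases ih with rfl | ⟨_, h2⟩
      · exact huA
      · exact h2
    obtain ⟨g, hgmem, hor⟩ := hadj
    rcases Finset.mem_union.mp hgmem with hgA | hgB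
    · exfalso
      apply absurd hpA
      apply deg_ne_zero_of_mem hgA
      rw [inc_ne_zero_iff]
      rcases hor with h' | h' <;> simp [h']
    · have hBw : deg ends B w' ≠ 0 := by
        apply deg_ne_zero_of_mem hgB
        rw [inc_ne_zero_iff]
        rcases hor with h' | h' <;> simp [h']
      have hAw : deg ends A w' = 0 := by
        by_contra h0
        exact hdisj _ h0 hBw
      exact Or.inr ⟨hBw, hAw⟩

/- ### list chain utilities -/

lemma getLastD_concat (l : List V) (a b : V) : (l ++ [b]).getLastD a = b := by
  induction l generalizing a with
  | nil => rfl
  | cons c l ih =>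
    rw [List.cons_append, List.getLastD_cons]
    exact ih c

lemma chain_concat {r : V → V → Prop} {l : List V} {a c : V}
    (h : List.Chain r a l) (h2 : r (l.getLastD a) c) : List.Chain r a (l ++ [c]) := by
  induction l generalizing a with
  | nil => exact List.Chain.cons h2 List.Chain.nil
  | cons d l ih =>
    obtain ⟨had, hch⟩ := List.isChain_cons_cons.mp h
    rw [List.getLastD_cons] at h2
    exact List.Chain.cons (by assumption) (ih hch h2)

lemma rt_to_chain {r : V → V → Prop} {a b : V} (h : ReflTransGen r a b) :
    ∃ l : List V, List.Chain r a l ∧ l.getLastD a = b := by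
  induction h with
  | refl => exact ⟨[], List.Chain.nil, rfl⟩
  | tail h' hr ih =>
    obtain ⟨l, hch, hlast⟩ := ih
    exact ⟨l ++ [_], chain_concat hch (hlast ▸ hr), getLastD_concat l a _⟩

lemma chain_reach {r : V → V → Prop} {a : V} {l : List V} (h : List.Chain r a l) :
    ∀ w ∈ a :: l, ReflTransGen r w (l.getLastD a) := by
  induction l generalizing a with
  | nil =>
    intro w hw
    rcases List.mem_singleton.mp hw with rfl
    exact ReflTransGen.refl
  | cons b l ih =>
    obtain ⟨hab, hch⟩ := List.isChain_cons_cons.mp h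
    intro w hw
    rw [List.getLastD_cons]
    rcases List.mem_cons.mp hw with rfl | hw'
    · exact ReflTransGen.head hab (ih hch b (List.mem_cons_self))
    · exact ih hch w hw'

lemma chain_suffix {r : V → V → Prop} :
    ∀ (l : List V) (a x : V), x ∈ l → List.Chain r a l →
    ∃ l₂ : List V, l₂.length < l.length ∧ List.Chain r x l₂ ∧
      l₂.getLastD x = l.getLastD a ∧ ∀ w ∈ l₂, w ∈ l := by
  intro l
  induction l with
  | nil => intro a x hx; exact absurd hx (List.not_mem_nil)
  | cons b l ih =>
    intro a x hx hch
    obtain ⟨hab, hch⟩ := List.isChain_cons_cons.mp hch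
    rw [List.getLastD_cons]
    by_cases hxb : x = b
    · subst hxb
      exact ⟨l, Nat.lt_succ_self _, hch, rfl, fun w hw => List.mem_cons_of_mem _ hw⟩
    · have hx' : x ∈ l := by
        rcases List.mem_cons.mp hx with h | h
        · exact absurd h hxb
        · exact h
      obtain ⟨l₂, hlen, hch₂, hlast, hsub⟩ := ih b x hx' hch
      exact ⟨l₂, Nat.lt_succ_of_lt hlen, hch₂, hlast, fun w hw => List.mem_cons_of_mem _ (hsub w hw)⟩

end StashAux

namespace StashAux
set_option linter.unusedSectionVars false

variable {V E : Type*} [Fintype V] [DecidableEq V] [Fintype E] [DecidableEq E]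
variable {ends : E → V × V}

open Relation Finset

lemma disjoint_of_spec {A F : Finset E} {e : E} (h : ∀ g ∈ A, g ∉ F ∧ g ≠ e) :
    Disjoint F A :=
  Finset.disjoint_right.mpr (fun a ha => (h a ha).1)

lemma inc_cases {g : E} {w : V} (hw : inc ends g w ≠ 0) :
    w = (ends g).1 ∨ w = (ends g).2 := by
  rcases inc_ne_zero_iff.mp hw with h | h
  exacts [Or.inl h.symm, Or.inr h.symm]

lemma inc_cases' {g : E} {a b w : V} (hor : ends g = (a, b) ∨ ends g = (b, a))
    (hw : inc ends g w ≠ 0) : w = a ∨ w = b := by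
  rcases inc_cases hw with h | h <;> rcases hor with h2 | h2 <;> rw [h2] at h <;>
    simp at h <;> simp [h]

lemma union_singleton' (F : Finset E) (g : E) : F ∪ {g} = insert g F := by
  ext a; simp [or_comm]

lemma union_insert' (F A : Finset E) (g : E) : F ∪ insert g A = insert g (F ∪ A) := by
  ext a; simp [Finset.mem_insert, Finset.mem_union, or_comm, or_left_comm]

lemma pathTo_aux {e : E} {F : Finset E} :
    ∀ (n : ℕ) (l : List V) (x : V), l.length ≤ n →
    List.Chain (adjOn ends (Finset.univ.erase e)) x l →
    deg ends F (l.getLastD x) ≠ 0 →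
    deg ends F x = 0 →
    ∃ A : Finset E,
      (∀ g ∈ A, g ∉ F ∧ g ≠ e) ∧
      deg ends A x = 1 ∧
      (∀ w, w ≠ x → deg ends F w = 0 → deg ends A w = 0 ∨ deg ends A w = 2) ∧
      (∀ w, deg ends F w ≠ 0 → deg ends A w ≤ 1) ∧
      (∀ w, deg ends A w ≠ 0 → w ∈ x :: l) ∧
      (∀ w, deg ends A w ≠ 0 → ∃ t, deg ends F t ≠ 0 ∧
        Relation.EqvGen (adjOn ends (F ∪ A)) w t) ∧
      A.card + zeta ends (F ∪ A) ≤ zeta ends F := by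
  intro n
  induction n with
  | zero =>
    intro l x hlen _ hlast hx
    rw [List.length_eq_zero_iff.mp (Nat.le_zero.mp hlen)] at hlast
    rw [List.getLastD_nil] at hlast
    exact absurd hx hlast
  | succ n ih =>
    intro l x hlen hch hlast hx
    cases l with
    | nil =>
      rw [List.getLastD_nil] at hlast
      exact absurd hx hlast
    | cons y l' =>
      obtain ⟨hxy, hch'⟩ := List.isChain_cons_cons.mp hch
      rw [List.getLastD_cons] at hlast
      have hlen' : l'.length ≤ n := by simpa using hlen
      obtain ⟨g, hgmem, hor⟩ := hxy
      have hge : g ≠ e := (Finset.mem_erase.mp hgmem).1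
      have hincx : inc ends g x ≠ 0 := by
        rw [inc_ne_zero_iff]; rcases hor with h | h <;> simp [h]
      have hincy : inc ends g y ≠ 0 := by
        rw [inc_ne_zero_iff]; rcases hor with h | h <;> simp [h]
      have hgF : g ∉ F := fun hgf => deg_ne_zero_of_mem hgf hincx hx
      by_cases hyF : deg ends F y = 0
      · -- y is still outside the support of F
        by_cases hyx : y = x
        · subst hyx
          obtain ⟨A, s1, s2, s3, s4, s5, s6, s7⟩ := ih l' y hlen' hch' hlast hx
          exact ⟨A, s1, s2, s3, s4,
            fun w hw => List.mem_cons.mpr (Or.inr (s5 w hw)), s6, s7⟩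
        · by_cases hxl : x ∈ l'
          · obtain ⟨l₂, hl₂len, hch₂, hlast₂, hsub₂⟩ := chain_suffix l' y x hxl hch'
            obtain ⟨A, s1, s2, s3, s4, s5, s6, s7⟩ :=
              ih l₂ x (le_of_lt (lt_of_lt_of_le hl₂len hlen')) hch₂
                (by rw [hlast₂]; exact hlast) hx
            refine ⟨A, s1, s2, s3, s4, ?_, s6, s7⟩
            intro w hw
            rcases List.mem_cons.mp (s5 w hw) with rfl | hw'
            · exact List.mem_cons_self
            · exact List.mem_cons.mpr (Or.inr (List.mem_cons.mpr (Or.inr (hsub₂ w hw'))))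
          · -- extend: recurse from y and prepend g
            have hxyne : x ≠ y := fun h => hyx h.symm
            obtain ⟨A', s1, s2, s3, s4, s5, s6, s7⟩ := ih l' y hlen' hch' hlast hyF
            have hA'x : deg ends A' x = 0 := by
              by_contra h0
              rcases List.mem_cons.mp (s5 x h0) with h | h
              · exact hxyne h
              · exact hxl h
            have hgA' : g ∉ A' := fun hga => (hA'x ▸ deg_ne_zero_of_mem hga hincx) rfl
            have hdisjFA' : Disjoint F A' := disjoint_of_spec s1
            have hdegins : ∀ w, deg ends (insert g A') w = inc ends g w + deg ends A' w :=
              fun w => deg_insert hgA' w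
            have hincother : ∀ w, w ≠ x → w ≠ y → inc ends g w = 0 := by
              intro w hwx hwy
              rcases hor with h | h
              · exact inc_eq_zero (by rw [h]; exact fun hh => hwx hh.symm)
                  (by rw [h]; exact fun hh => hwy hh.symm)
              · exact inc_eq_zero (by rw [h]; exact fun hh => hwy hh.symm)
                  (by rw [h]; exact fun hh => hwx hh.symm)
            have hincy1 : inc ends g y = 1 :=
              inc_eq_one hor.symm (fun h => hxyne h.symm)
            have hincx1 : inc ends g x = 1 := inc_eq_one hor hxyne
            refine ⟨insert g A', ?_, ?_, ?_, ?_, ?_, ?_, ?_⟩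
            · intro g' hg'
              rcases Finset.mem_insert.mp hg' with rfl | hg'
              · exact ⟨hgF, hge⟩
              · exact s1 g' hg'
            · rw [hdegins x, hA'x, hincx1]
            · intro w hwx hwF
              rw [hdegins w]
              by_cases hwy : w = y
              · subst hwy
                rw [hincy1, s2]
                exact Or.inr rfl
              · rw [hincother w hwx hwy, zero_add]
                exact s3 w hwy hwF
            · intro w hwF
              have hwx : w ≠ x := fun h => hwF (by rw [h]; exact hx)
              have hwy : w ≠ y := fun h => hwF (by rw [h]; exact hyF)
              rw [hdegins w, hincother w hwx hwy, zero_add]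
              exact s4 w hwF
            · intro w hw
              rw [hdegins w] at hw
              by_cases hwA' : deg ends A' w ≠ 0
              · exact List.mem_cons.mpr (Or.inr (s5 w hwA'))
              · push_neg at hwA'
                rw [hwA', add_zero] at hw
                rcases inc_cases' hor hw with rfl | rfl
                · exact List.mem_cons_self
                · exact List.mem_cons.mpr (Or.inr (List.mem_cons_self))
            · intro w hw
              have hmono : ∀ a b, Relation.EqvGen (adjOn ends (F ∪ A')) a b →
                  Relation.EqvGen (adjOn ends (F ∪ insert g A')) a b := by
                intro a b hab
                refine Relation.EqvGen.mono (fun p q hpq => adjOn_mono ?_ hpq) _ _ hab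
                exact Finset.union_subset_union (le_refl F) (Finset.subset_insert g A')
              have hyA' : deg ends A' y ≠ 0 := by rw [s2]; exact one_ne_zero
              obtain ⟨t, ht, hconnyt⟩ := s6 y hyA'
              have hadjxy : Relation.EqvGen (adjOn ends (F ∪ insert g A')) x y :=
                Relation.EqvGen.rel _ _
                  ⟨g, Finset.mem_union_right _ (Finset.mem_insert_self g A'), hor⟩
              rw [hdegins w] at hw
              by_cases hwA' : deg ends A' w ≠ 0
              · obtain ⟨t', ht', hc⟩ := s6 w hwA'
                exact ⟨t', ht', hmono _ _ hc⟩
              · push_neg at hwA'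
                rw [hwA', add_zero] at hw
                rcases inc_cases' hor hw with rfl | rfl
                · exact ⟨t, ht, Relation.EqvGen.trans _ _ _ hadjxy (hmono _ _ hconnyt)⟩
                · exact ⟨t, ht, hmono _ _ hconnyt⟩
            · have hxFA' : deg ends (F ∪ A') x = 0 := by
                rw [deg_union hdisjFA', hx, hA'x]
              have hne : ¬ Relation.EqvGen (adjOn ends (F ∪ A')) x y := fun hEq =>
                (not_eqvGen_of_deg_zero (fun h => hxyne h.symm) hxFA')
                  (Relation.EqvGen.symm _ _ hEq)
              have hlt := zeta_insert_lt' (F := F ∪ A') hor hne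
              rw [union_insert' F A' g, Finset.card_insert_of_notMem hgA']
              omega
      · -- contact: y is in the support of F
        have hxyne : x ≠ y := fun h => hyF (by rw [← h]; exact hx)
        have hincother : ∀ w, w ≠ x → w ≠ y → inc ends g w = 0 := by
          intro w hwx hwy
          rcases hor with h | h
          · exact inc_eq_zero (by rw [h]; exact fun hh => hwx hh.symm)
              (by rw [h]; exact fun hh => hwy hh.symm)
          · exact inc_eq_zero (by rw [h]; exact fun hh => hwy hh.symm)
              (by rw [h]; exact fun hh => hwx hh.symm)
        refine ⟨{g}, ?_, ?_, ?_, ?_, ?_, ?_, ?_⟩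
        · intro g' hg'
          rw [Finset.mem_singleton.mp hg']
          exact ⟨hgF, hge⟩
        · rw [deg_singleton]
          exact inc_eq_one hor hxyne
        · intro w hwx hwF
          left
          rw [deg_singleton]
          exact hincother w hwx (fun h => hyF (by rw [← h]; exact hwF))
        · intro w hwF
          rw [deg_singleton]
          refine inc_le_one ?_
          rcases hor with h | h <;> rw [h]
          · exact hxyne
          · exact fun hh => hxyne hh.symm
        · intro w hw
          rw [deg_singleton] at hw
          rcases inc_cases' hor hw with rfl | rfl
          · exact List.mem_cons_self
          · exact List.mem_cons.mpr (Or.inr (List.mem_cons_self))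
        · intro w hw
          refine ⟨y, hyF, ?_⟩
          rw [deg_singleton] at hw
          have hadj : Relation.EqvGen (adjOn ends (F ∪ {g})) x y :=
            Relation.EqvGen.rel _ _
              ⟨g, Finset.mem_union_right _ (Finset.mem_singleton_self g), hor⟩
          rcases inc_cases' hor hw with rfl | rfl
          · exact hadj
          · exact Relation.EqvGen.refl _
        · rw [union_singleton' F g, Finset.card_singleton]
          have hlt := zeta_insert_lt' (F := F) hor
            (fun hEq => (not_eqvGen_of_deg_zero (fun h => hxyne h.symm) hx)
              (Relation.EqvGen.symm _ _ hEq))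
          omega

/-- A fresh vertex that reaches the support of `F` avoiding `e` can be joined
to the support by a path. -/
lemma pathTo {e : E} {F : Finset E} {x s : V}
    (hx : deg ends F x = 0) (hs : deg ends F s ≠ 0)
    (hr : ReflTransGen (adjOn ends (Finset.univ.erase e)) x s) :
    ∃ A : Finset E,
      (∀ g ∈ A, g ∉ F ∧ g ≠ e) ∧
      deg ends A x = 1 ∧
      (∀ w, w ≠ x → deg ends F w = 0 → deg ends A w = 0 ∨ deg ends A w = 2) ∧
      (∀ w, deg ends F w ≠ 0 → deg ends A w ≤ 1) ∧
      (∀ w, deg ends A w ≠ 0 →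
        ReflTransGen (adjOn ends (Finset.univ.erase e)) w s) ∧
      (∀ w, deg ends A w ≠ 0 → ∃ t, deg ends F t ≠ 0 ∧
        Relation.EqvGen (adjOn ends (F ∪ A)) w t) ∧
      A.card + zeta ends (F ∪ A) ≤ zeta ends F := by
  obtain ⟨l, hch, hlast⟩ := rt_to_chain hr
  obtain ⟨A, s1, s2, s3, s4, s5, s6, s7⟩ :=
    pathTo_aux l.length l x (le_refl _) hch (by rw [hlast]; exact hs) hx
  refine ⟨A, s1, s2, s3, s4, ?_, s6, s7⟩
  intro w hw
  have := chain_reach hch w (s5 w hw)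
  rwa [hlast] at this

end StashAux

namespace StashAux
set_option linter.unusedSectionVars false

variable {V E : Type*} [Fintype V] [DecidableEq V] [Fintype E] [DecidableEq E]
variable {ends : E → V × V}

open Relation Finset

/-- Spec of a tadpole attached at `u` (degree 1 or 2 at `u`, at least 2 elsewhere). -/
def TSpec (ends : E → V × V) (e : E) (F A : Finset E) (u : V) : Prop :=
  (∀ g ∈ A, g ∉ F ∧ g ≠ e) ∧
  (1 ≤ deg ends A u ∧ deg ends A u ≤ 2) ∧
  (∀ w, w ≠ u → deg ends A w = 0 ∨ 2 ≤ deg ends A w) ∧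
  (∀ w, deg ends A w ≠ 0 → ¬ Reach ends e F w) ∧
  (∀ w, deg ends A w ≠ 0 → Relation.EqvGen (adjOn ends A) w u) ∧
  (A.card + zeta ends (F ∪ A) ≤ zeta ends F + 1)

/-- Spec of a fresh path from `u` to `v` (the stuck case). -/
def PSpec (ends : E → V × V) (e : E) (F A : Finset E) (u v : V) : Prop :=
  (∀ g ∈ A, g ∉ F ∧ g ≠ e) ∧
  deg ends A u = 1 ∧ deg ends A v = 1 ∧
  (∀ w, w ≠ u → w ≠ v → deg ends A w = 0 ∨ deg ends A w = 2) ∧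
  (∀ w, deg ends A w ≠ 0 → ¬ Reach ends e F w) ∧
  (∀ w, deg ends A w ≠ 0 → Relation.EqvGen (adjOn ends A) w u) ∧
  (A.card + zeta ends (F ∪ A) ≤ zeta ends F)

lemma other_endpoint {g : E} {z : V} (h : inc ends g z ≠ 0) :
    ∃ w, ends g = (z, w) ∨ ends g = (w, z) := by
  rcases inc_cases h with h1 | h1
  · exact ⟨(ends g).2, Or.inl (by rw [h1])⟩
  · exact ⟨(ends g).1, Or.inr (by rw [h1])⟩

lemma inc_other_zero {g : E} {a b w : V} (hor : ends g = (a, b) ∨ ends g = (b, a))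
    (hwa : w ≠ a) (hwb : w ≠ b) : inc ends g w = 0 := by
  rcases hor with h | h
  · exact inc_eq_zero (by rw [h]; exact fun hh => hwa hh.symm)
      (by rw [h]; exact fun hh => hwb hh.symm)
  · exact inc_eq_zero (by rw [h]; exact fun hh => hwb hh.symm)
      (by rw [h]; exact fun hh => hwa hh.symm)

lemma inc_loop {g : E} {z : V} (h : ends g = (z, z)) : inc ends g z = 2 := by
  simp [inc, h]

lemma tadpole_aux {e : E} {F : Finset E} {u v : V}
    (hm : ends e = (u, v) ∨ ends e = (v, u)) (huv : u ≠ v)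
    (hlf : ∀ w, deg ends Finset.univ w ≠ 1) :
    ∀ (n : ℕ) (A : Finset E) (z : V) (f : E),
    (Finset.univ \ A).card ≤ n →
    (∀ g ∈ A, g ∉ F ∧ g ≠ e) →
    deg ends A u = 1 → deg ends A z = 1 → u ≠ z →
    (∀ w, w ≠ u → w ≠ z → deg ends A w = 0 ∨ deg ends A w = 2) →
    (∀ w, deg ends A w ≠ 0 → ¬ Reach ends e F w) →
    (∀ w, deg ends A w ≠ 0 → Relation.EqvGen (adjOn ends A) w u) →
    A.card + zeta ends (F ∪ A) ≤ zeta ends F →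
    f ∈ A → inc ends f z = 1 →
    (∃ A', TSpec ends e F A' u) ∨ (∃ A', PSpec ends e F A' u v) := by
  intro n
  induction n using Nat.strong_induction_on with
  | _ n ih =>
  intro A z f hmeas i1 i2a i2b i2c i2d i3 i6 i5 if1 if2
  have hAz : deg ends A z ≠ 0 := by rw [i2b]; exact one_ne_zero
  have hAu : deg ends A u ≠ 0 := by rw [i2a]; exact one_ne_zero
  have hnrz : ¬ Reach ends e F z := i3 z hAz
  have hFz : deg ends F z = 0 := deg_zero_of_not_reach hnrz
  have hAuniv : A ⊆ Finset.univ := Finset.subset_univ A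
  have hdegz2 : 2 ≤ deg ends Finset.univ z := by
    have h1 : deg ends A z ≤ deg ends Finset.univ z := deg_mono hAuniv z
    have h2 := hlf z
    omega
  by_cases hgex : ∃ g, inc ends g z ≠ 0 ∧ g ≠ f ∧ g ≠ e
  · obtain ⟨g, hincgz, hgf, hge⟩ := hgex
    have hgA : g ∉ A := by
      intro hgmem
      have hsplit : inc ends f z + deg ends (A.erase f) z = deg ends A z := by
        rw [deg_eq_sum, deg_eq_sum]
        exact Finset.add_sum_erase A (fun g => inc ends g z) if1
      have hzero : deg ends (A.erase f) z = 0 := by omega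
      exact deg_ne_zero_of_mem (Finset.mem_erase.mpr ⟨hgf, hgmem⟩) hincgz hzero
    have hgF : g ∉ F := fun hgf' => deg_ne_zero_of_mem hgf' hincgz hFz
    obtain ⟨w', hgor⟩ := other_endpoint hincgz
    have hadjzw : adjOn ends (Finset.univ.erase e) z w' :=
      ⟨g, Finset.mem_erase.mpr ⟨hge, Finset.mem_univ g⟩, hgor⟩
    have hnrw : ¬ Reach ends e F w' := fun hr => hnrz (reach_of_adj hadjzw hr)
    have hFw : deg ends F w' = 0 := deg_zero_of_not_reach hnrw
    have hdisjFA : Disjoint F A := disjoint_of_spec i1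
    have hinsU : F ∪ insert g A = insert g (F ∪ A) := union_insert' F A g
    have hcard' : (insert g A).card = A.card + 1 := Finset.card_insert_of_notMem hgA
    have hdegins : ∀ w, deg ends (insert g A) w = inc ends g w + deg ends A w :=
      fun w => deg_insert hgA w
    by_cases hwA : deg ends A w' ≠ 0
    · -- close the tadpole
      left
      refine ⟨insert g A, ?_, ?_, ?_, ?_, ?_, ?_⟩
      · intro g' hg'
        rcases Finset.mem_insert.mp hg' with rfl | hg'
        · exact ⟨hgF, hge⟩
        · exact i1 g' hg'
      · rw [hdegins u, i2a]
        by_cases hwu : w' = u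
        · subst hwu
          have : inc ends g w' = 1 := inc_eq_one hgor.symm i2c
          omega
        · rw [inc_other_zero hgor i2c (fun h => hwu h.symm)]
          omega
      · intro w hwu
        rw [hdegins w]
        by_cases hwz : w = z
        · subst hwz
          right
          have : inc ends g w ≠ 0 := hincgz
          omega
        · by_cases hww' : w = w'
          · subst hww'
            rcases i2d w hwu hwz with h0 | h2
            · exact absurd h0 hwA
            · right; omega
          · rw [inc_other_zero hgor hwz hww', zero_add]
            rcases i2d w hwu hwz with h0 | h2
            · exact Or.inl h0
            · exact Or.inr (le_of_eq h2.symm)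
      · intro w hw
        rw [hdegins w] at hw
        by_cases hwA0 : deg ends A w ≠ 0
        · exact i3 w hwA0
        · push_neg at hwA0
          rw [hwA0, add_zero] at hw
          rcases inc_cases' hgor hw with rfl | rfl
          · exact hnrz
          · exact hnrw
      · intro w hw
        have hmono : ∀ a b, Relation.EqvGen (adjOn ends A) a b →
            Relation.EqvGen (adjOn ends (insert g A)) a b := fun a b hab =>
          Relation.EqvGen.mono (fun p q hpq => adjOn_mono (Finset.subset_insert g A) hpq) _ _ hab
        rw [hdegins w] at hw
        by_cases hwA0 : deg ends A w ≠ 0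
        · exact hmono _ _ (i6 w hwA0)
        · push_neg at hwA0
          rw [hwA0, add_zero] at hw
          rcases inc_cases' hgor hw with rfl | rfl
          · exact hmono _ _ (i6 w hAz)
          · exact hmono _ _ (i6 w hwA)
      · have hz1 : zeta ends (F ∪ insert g A) ≤ zeta ends (F ∪ A) := by
          rw [hinsU]
          exact zeta_mono (Finset.subset_insert _ _)
        rw [hcard']
        omega
    · -- extend the path
      push_neg at hwA
      have hwz : w' ≠ z := fun h => hAz (h ▸ hwA)
      have hwu : w' ≠ u := fun h => hAu (h ▸ hwA)
      have hFAw : deg ends (F ∪ A) w' = 0 := by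
        rw [deg_union hdisjFA, hFw, hwA]
      have hne : ¬ Relation.EqvGen (adjOn ends (F ∪ A)) z w' :=
        not_eqvGen_of_deg_zero hwz.symm hFAw
      have hlt := zeta_insert_lt' (F := F ∪ A) hgor hne
      have hmeas' : (Finset.univ \ insert g A).card < (Finset.univ \ A).card := by
        have hsub : Finset.univ \ insert g A ⊆ Finset.univ \ A :=
          Finset.sdiff_subset_sdiff (le_refl _) (Finset.subset_insert g A)
        have hgmem' : g ∈ Finset.univ \ A :=
          Finset.mem_sdiff.mpr ⟨Finset.mem_univ g, hgA⟩
        have hgnot : g ∉ Finset.univ \ insert g A := fun h =>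
          (Finset.mem_sdiff.mp h).2 (Finset.mem_insert_self g A)
        exact Finset.card_lt_card ((Finset.ssubset_iff_of_subset hsub).mpr ⟨g, hgmem', hgnot⟩)
      refine ih (Finset.univ \ insert g A).card (lt_of_lt_of_le hmeas' hmeas)
        (insert g A) w' g (le_refl _) ?_ ?_ ?_ ?_ ?_ ?_ ?_ ?_ ?_ ?_
      · intro g' hg'
        rcases Finset.mem_insert.mp hg' with rfl | hg'
        · exact ⟨hgF, hge⟩
        · exact i1 g' hg'
      · rw [hdegins u, inc_other_zero hgor i2c (fun h => hwu h.symm), zero_add, i2a]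
      · rw [hdegins w', hwA, add_zero]
        exact inc_eq_one hgor.symm hwz
      · exact fun h => hwu h.symm
      · intro w hwu' hww'
        rw [hdegins w]
        by_cases hwz' : w = z
        · subst hwz'
          right
          rw [inc_eq_one hgor (fun h => hww' h), i2b]
        · rw [inc_other_zero hgor hwz' hww', zero_add]
          exact i2d w hwu' hwz'
      · intro w hw
        rw [hdegins w] at hw
        by_cases hwA0 : deg ends A w ≠ 0
        · exact i3 w hwA0
        · push_neg at hwA0
          rw [hwA0, add_zero] at hw
          rcases inc_cases' hgor hw with rfl | rfl
          · exact hnrz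
          · exact hnrw
      · intro w hw
        have hmono : ∀ a b, Relation.EqvGen (adjOn ends A) a b →
            Relation.EqvGen (adjOn ends (insert g A)) a b := fun a b hab =>
          Relation.EqvGen.mono (fun p q hpq => adjOn_mono (Finset.subset_insert g A) hpq) _ _ hab
        have hadj : Relation.EqvGen (adjOn ends (insert g A)) w' z :=
          Relation.EqvGen.rel _ _ ⟨g, Finset.mem_insert_self g A, hgor.symm⟩
        rw [hdegins w] at hw
        by_cases hwA0 : deg ends A w ≠ 0
        · exact hmono _ _ (i6 w hwA0)
        · push_neg at hwA0
          rw [hwA0, add_zero] at hw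
          rcases inc_cases' hgor hw with rfl | rfl
          · exact hmono _ _ (i6 w hAz)
          · exact Relation.EqvGen.trans _ _ _ hadj (hmono _ _ (i6 z hAz))
      · have hz1 : zeta ends (F ∪ insert g A) < zeta ends (F ∪ A) := by
          rw [hinsU]
          exact hlt
        rw [hcard']
        omega
      · exact Finset.mem_insert_self g A
      · exact inc_eq_one hgor.symm hwz
  · -- stuck: z must be the other endpoint of e
    push_neg at hgex
    right
    have hef : e ≠ f := fun h => (i1 f if1).2 h.symm
    have hsplit1 : inc ends f z + deg ends (Finset.univ.erase f) z
        = deg ends Finset.univ z := by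
      rw [deg_eq_sum, deg_eq_sum]
      exact Finset.add_sum_erase Finset.univ (fun g => inc ends g z) (Finset.mem_univ f)
    have hef' : e ∈ Finset.univ.erase f := Finset.mem_erase.mpr ⟨hef, Finset.mem_univ e⟩
    have hsplit2 : inc ends e z + deg ends ((Finset.univ.erase f).erase e) z
        = deg ends (Finset.univ.erase f) z := by
      rw [deg_eq_sum, deg_eq_sum]
      exact Finset.add_sum_erase _ (fun g => inc ends g z) hef'
    have hrest : deg ends ((Finset.univ.erase f).erase e) z = 0 := by
      rw [deg_eq_sum]
      refine Finset.sum_eq_zero ?_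
      intro g hg
      have h1 := Finset.mem_erase.mp hg
      have h2 := Finset.mem_erase.mp h1.2
      by_contra h0
      exact h1.1 (hgex g h0 h2.1)
    have hincez : inc ends e z ≠ 0 := by omega
    have hzv : z = v := by
      rcases inc_cases' hm hincez with h | h
      · exact absurd h.symm i2c
      · exact h
    subst hzv
    exact ⟨A, i1, i2a, i2b, i2d, i3, i6, i5⟩

/-- From a fresh non-reaching endpoint `u` of `e` one can grow either a tadpole
or a fresh path to the other endpoint `v`. -/
lemma tadpole {e : E} {F : Finset E} {u v : V}
    (hm : ends e = (u, v) ∨ ends e = (v, u)) (huv : u ≠ v)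
    (hlf : ∀ w, deg ends Finset.univ w ≠ 1)
    (hu0 : deg ends F u = 0) (hnr : ¬ Reach ends e F u) :
    (∃ A, TSpec ends e F A u) ∨ (∃ A, PSpec ends e F A u v) := by
  have hincu : inc ends e u = 1 := inc_eq_one hm huv
  have hdegu : deg ends Finset.univ u ≠ 0 :=
    deg_ne_zero_of_mem (Finset.mem_univ e) (by omega)
  have hdegu2 : 2 ≤ deg ends Finset.univ u := by
    have := hlf u
    omega
  have hsplit : inc ends e u + deg ends (Finset.univ.erase e) u
      = deg ends Finset.univ u := by
    rw [deg_eq_sum, deg_eq_sum]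
    exact Finset.add_sum_erase Finset.univ (fun g => inc ends g u) (Finset.mem_univ e)
  have hrest : deg ends (Finset.univ.erase e) u ≠ 0 := by omega
  obtain ⟨g, hgmem, hincgu⟩ := exists_inc_of_deg_ne_zero hrest
  have hge : g ≠ e := (Finset.mem_erase.mp hgmem).1
  have hgF : g ∉ F := fun hgf => deg_ne_zero_of_mem hgf hincgu hu0
  obtain ⟨w', hgor⟩ := other_endpoint hincgu
  have hadjuw : adjOn ends (Finset.univ.erase e) u w' :=
    ⟨g, Finset.mem_erase.mpr ⟨hge, Finset.mem_univ g⟩, hgor⟩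
  have hnrw : ¬ Reach ends e F w' := fun hr => hnr (reach_of_adj hadjuw hr)
  have hFw : deg ends F w' = 0 := deg_zero_of_not_reach hnrw
  have hgun : F ∪ {g} = insert g F := union_singleton' F g
  by_cases hwu : w' = u
  · -- first edge is a loop at u: this is already a tadpole
    subst hwu
    left
    have hloop : ends g = (w', w') := by
      rcases hgor with h | h <;> exact h
    refine ⟨{g}, ?_, ?_, ?_, ?_, ?_, ?_⟩
    · intro g' hg'
      rw [Finset.mem_singleton.mp hg']
      exact ⟨hgF, hge⟩
    · rw [deg_singleton, inc_loop hloop]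
      omega
    · intro w hwne
      left
      rw [deg_singleton]
      exact inc_other_zero hgor hwne hwne
    · intro w hw
      rw [deg_singleton] at hw
      rcases inc_cases' hgor hw with rfl | rfl <;> exact hnr
    · intro w hw
      rw [deg_singleton] at hw
      rcases inc_cases' hgor hw with rfl | rfl <;> exact Relation.EqvGen.refl _
    · have hz1 : zeta ends (F ∪ {g}) ≤ zeta ends F := by
        rw [hgun]
        exact zeta_mono (Finset.subset_insert _ _)
      rw [Finset.card_singleton]
      omega
  · -- grow from the initial edge
    have huw : u ≠ w' := fun h => hwu h.symm
    have hincgu1 : inc ends g u = 1 := inc_eq_one hgor huw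
    have hincgw1 : inc ends g w' = 1 := inc_eq_one hgor.symm hwu
    refine tadpole_aux hm huv hlf (Finset.univ \ ({g} : Finset E)).card
      ({g} : Finset E) w' g (le_refl _) ?_ ?_ ?_ ?_ ?_ ?_ ?_ ?_ ?_ ?_
    · intro g' hg'
      rw [Finset.mem_singleton.mp hg']
      exact ⟨hgF, hge⟩
    · rw [deg_singleton]; exact hincgu1
    · rw [deg_singleton]; exact hincgw1
    · exact huw
    · intro w hwu' hww'
      left
      rw [deg_singleton]
      exact inc_other_zero hgor hwu' hww'
    · intro w hw
      rw [deg_singleton] at hw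
      rcases inc_cases' hgor hw with rfl | rfl
      · exact hnr
      · exact hnrw
    · intro w hw
      rw [deg_singleton] at hw
      rcases inc_cases' hgor hw with rfl | rfl
      · exact Relation.EqvGen.refl _
      · exact Relation.EqvGen.rel _ _ ⟨g, Finset.mem_singleton_self g, hgor.symm⟩
    · rw [hgun, Finset.card_singleton]
      have hlt := zeta_insert_lt' (F := F) hgor
        (not_eqvGen_of_deg_zero huw hFw)
      omega
    · exact Finset.mem_singleton_self g
    · exact hincgw1

end StashAux

namespace StashAux
set_option linter.unusedSectionVars false

variable {V E : Type*} [Fintype V] [DecidableEq V] [Fintype E] [DecidableEq E]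
variable {ends : E → V × V}

open Relation Finset

/-- Connectivity on the support. -/
def Conn (ends : E → V × V) (F : Finset E) : Prop :=
  ∀ a b, deg ends F a ≠ 0 → deg ends F b ≠ 0 → Relation.EqvGen (adjOn ends F) a b

lemma conn_assemble {F₀ Fn : Finset E} (hsub : F₀ ⊆ Fn) (hconn₀ : Conn ends F₀)
    (hanch : ∀ w, deg ends Fn w ≠ 0 → ∃ t, deg ends F₀ t ≠ 0 ∧
      Relation.EqvGen (adjOn ends Fn) w t) :
    Conn ends Fn := by
  intro a b ha hb
  obtain ⟨t, ht, hat⟩ := hanch a ha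
  obtain ⟨t', ht', hbt⟩ := hanch b hb
  have htt : Relation.EqvGen (adjOn ends Fn) t t' :=
    Relation.EqvGen.mono (fun p q hpq => adjOn_mono hsub hpq) _ _ (hconn₀ t t' ht ht')
  exact Relation.EqvGen.trans _ _ _ hat
    (Relation.EqvGen.trans _ _ _ htt (Relation.EqvGen.symm _ _ hbt))

/-- Attach a path from `x` to the support of `F` (or nothing if `x` is already there). -/
lemma attach_one {e : E} {F : Finset E} {x : V} (hr : Reach ends e F x) :
    ∃ A : Finset E,
      (∀ g ∈ A, g ∉ F ∧ g ≠ e) ∧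
      (deg ends F x = 0 → deg ends A x = 1) ∧
      (∀ w, w ≠ x → deg ends F w = 0 → deg ends A w = 0 ∨ deg ends A w = 2) ∧
      (∀ w, deg ends F w ≠ 0 → deg ends A w ≤ 1) ∧
      (∀ w, deg ends A w ≠ 0 → ∃ t, deg ends F t ≠ 0 ∧
        Relation.EqvGen (adjOn ends (F ∪ A)) w t) ∧
      A.card + zeta ends (F ∪ A) ≤ zeta ends F := by
  by_cases hx : deg ends F x = 0
  · obtain ⟨s, hs, hrt⟩ := hr
    obtain ⟨A, a1, a2, a3, a4, _, a6, a7⟩ := pathTo hx hs hrt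
    exact ⟨A, a1, fun _ => a2, a3, a4, a6, a7⟩
  · refine ⟨∅, by simp, fun h => absurd h hx, ?_, ?_, ?_, ?_⟩
    · intro w _ _
      exact Or.inl (deg_empty w)
    · intro w _
      rw [deg_empty]
      omega
    · intro w hw
      exact absurd (deg_empty w) hw
    · rw [Finset.union_empty, Finset.card_empty]
      omega

lemma step_bothreach {e : E} {F₀ : Finset E} {u v : V}
    (hm : ends e = (u, v) ∨ ends e = (v, u))
    (hconn₀ : Conn ends F₀) (hlf₀ : ∀ w, deg ends F₀ w ≠ 1) (he : e ∉ F₀)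
    (hru : Reach ends e F₀ u) (hrv : Reach ends e F₀ v) :
    ∃ Fn : Finset E, F₀ ⊆ Fn ∧ e ∈ Fn ∧ Conn ends Fn ∧ (∀ w, deg ends Fn w ≠ 1) ∧
      Fn.card + zeta ends Fn ≤ F₀.card + zeta ends F₀ + 1 := by
  obtain ⟨Au, u1, u2, u3, u4, u6, u7⟩ := attach_one hru
  have hdisj0u : Disjoint F₀ Au := disjoint_of_spec u1
  have hrv₁ : Reach ends e (F₀ ∪ Au) v := reach_mono Finset.subset_union_left hrv
  obtain ⟨Av, v1, v2, v3, v4, v6, v7⟩ := attach_one (F := F₀ ∪ Au) hrv₁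
  have hdisj1v : Disjoint (F₀ ∪ Au) Av := disjoint_of_spec v1
  have heAu : e ∉ Au := fun h => (u1 e h).2 rfl
  have heAv : e ∉ Av := fun h => (v1 e h).2 rfl
  have he1 : e ∉ (F₀ ∪ Au) ∪ Av := by
    simp only [Finset.mem_union]
    rintro ((h | h) | h)
    exacts [he h, heAu h, heAv h]
  set Fn := insert e ((F₀ ∪ Au) ∪ Av) with hFn_def
  have hsub : F₀ ⊆ Fn := fun a ha => Finset.mem_insert_of_mem
    (Finset.mem_union_left _ (Finset.mem_union_left _ ha))
  have hdeg : ∀ w, deg ends Fn w =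
      inc ends e w + (deg ends F₀ w + deg ends Au w + deg ends Av w) := by
    intro w
    rw [hFn_def, deg_insert he1, deg_union hdisj1v, deg_union hdisj0u]
  have hincu : inc ends e u ≠ 0 := by
    rw [inc_ne_zero_iff]
    rcases hm with h | h <;> simp [h]
  have hincv : inc ends e v ≠ 0 := by
    rw [inc_ne_zero_iff]
    rcases hm with h | h <;> simp [h]
  have hF₁u : deg ends F₀ u + deg ends Au u ≠ 0 := by
    by_cases h0 : deg ends F₀ u = 0
    · rw [h0, u2 h0]; omega
    · omega
  have hF₁v : deg ends (F₀ ∪ Au) v + deg ends Av v ≠ 0 := by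
    by_cases h0 : deg ends (F₀ ∪ Au) v = 0
    · rw [h0, v2 h0]; omega
    · omega
  have hlfn : ∀ w, deg ends Fn w ≠ 1 := by
    intro w
    rw [hdeg w]
    by_cases h0 : deg ends F₀ w = 0
    · by_cases hwu : w = u
      · subst hwu
        have h2 := u2 h0
        omega
      · by_cases hwv : w = v
        · subst hwv
          rcases u3 w hwu h0 with h2 | h2
          · have hF₁w : deg ends (F₀ ∪ Au) w = 0 := by
              rw [deg_union hdisj0u, h0, h2]
            have h3 := v2 hF₁w
            omega
          · have hF₁w : deg ends (F₀ ∪ Au) w ≠ 0 := by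
              rw [deg_union hdisj0u, h0, h2]; omega
            have h3 := v4 w hF₁w
            omega
        · have hincw : inc ends e w = 0 := inc_other_zero hm hwu hwv
          rcases u3 w hwu h0 with h2 | h2
          · have hF₁w : deg ends (F₀ ∪ Au) w = 0 := by
              rw [deg_union hdisj0u, h0, h2]
            rcases v3 w hwv hF₁w with h3 | h3 <;> omega
          · have hF₁w : deg ends (F₀ ∪ Au) w ≠ 0 := by
              rw [deg_union hdisj0u, h0, h2]; omega
            have h3 := v4 w hF₁w
            omega
    · have h2 := hlf₀ w
      omega
  have hanch : ∀ w, deg ends Fn w ≠ 0 → ∃ t, deg ends F₀ t ≠ 0 ∧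
      Relation.EqvGen (adjOn ends Fn) w t := by
    have hmono1 : ∀ a b, Relation.EqvGen (adjOn ends (F₀ ∪ Au)) a b →
        Relation.EqvGen (adjOn ends Fn) a b := fun a b hab =>
      Relation.EqvGen.mono (fun p q hpq => adjOn_mono
        (fun g hg => Finset.mem_insert_of_mem (Finset.mem_union_left _ hg)) hpq) _ _ hab
    have hmono2 : ∀ a b, Relation.EqvGen (adjOn ends ((F₀ ∪ Au) ∪ Av)) a b →
        Relation.EqvGen (adjOn ends Fn) a b := fun a b hab =>
      Relation.EqvGen.mono (fun p q hpq => adjOn_mono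
        (Finset.subset_insert _ _) hpq) _ _ hab
    have hresolve : ∀ t₁, deg ends (F₀ ∪ Au) t₁ ≠ 0 → ∃ t, deg ends F₀ t ≠ 0 ∧
        Relation.EqvGen (adjOn ends Fn) t₁ t := by
      intro t₁ ht₁
      rw [deg_union hdisj0u] at ht₁
      by_cases h0 : deg ends F₀ t₁ ≠ 0
      · exact ⟨t₁, h0, Relation.EqvGen.refl _⟩
      · push_neg at h0
        have hAu : deg ends Au t₁ ≠ 0 := by omega
        obtain ⟨t, ht, hc⟩ := u6 t₁ hAu
        exact ⟨t, ht, hmono1 _ _ hc⟩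
    intro w hw
    by_cases h0 : deg ends F₀ w ≠ 0
    · exact ⟨w, h0, Relation.EqvGen.refl _⟩
    · push_neg at h0
      by_cases hAu : deg ends Au w ≠ 0
      · obtain ⟨t, ht, hc⟩ := u6 w hAu
        exact ⟨t, ht, hmono1 _ _ hc⟩
      · push_neg at hAu
        by_cases hAv : deg ends Av w ≠ 0
        · obtain ⟨t₁, ht₁, hc⟩ := v6 w hAv
          obtain ⟨t, ht, hc2⟩ := hresolve t₁ ht₁
          exact ⟨t, ht, Relation.EqvGen.trans _ _ _ (hmono2 _ _ hc) hc2⟩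
        · push_neg at hAv
          rw [hdeg w, h0, hAu, hAv] at hw
          simp only [add_zero] at hw
          rcases inc_cases' hm hw with rfl | rfl
          · exact absurd (by rw [h0, hAu]) hF₁u
          · exact absurd (by rw [deg_union hdisj0u, h0, hAu, hAv]) hF₁v
  have hcard : Fn.card = F₀.card + Au.card + Av.card + 1 := by
    rw [hFn_def, Finset.card_insert_of_notMem he1,
      Finset.card_union_of_disjoint hdisj1v, Finset.card_union_of_disjoint hdisj0u]
  have hz1 : zeta ends Fn ≤ zeta ends ((F₀ ∪ Au) ∪ Av) := by
    rw [hFn_def]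
    exact zeta_mono (Finset.subset_insert _ _)
  refine ⟨Fn, hsub, Finset.mem_insert_self _ _, conn_assemble hsub hconn₀ hanch,
    hlfn, ?_⟩
  rw [hcard]
  omega

end StashAux

namespace StashAux
set_option linter.unusedSectionVars false

variable {V E : Type*} [Fintype V] [DecidableEq V] [Fintype E] [DecidableEq E]
variable {ends : E → V × V}

open Relation Finset

lemma step_onereach {e : E} {F₀ : Finset E} {u v : V}
    (hm : ends e = (u, v) ∨ ends e = (v, u))
    (hlf : ∀ w, deg ends Finset.univ w ≠ 1)
    (hconn₀ : Conn ends F₀) (hlf₀ : ∀ w, deg ends F₀ w ≠ 1) (he : e ∉ F₀)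
    (hnu : ¬ Reach ends e F₀ u) (hrv : Reach ends e F₀ v) :
    ∃ Fn : Finset E, F₀ ⊆ Fn ∧ e ∈ Fn ∧ Conn ends Fn ∧ (∀ w, deg ends Fn w ≠ 1) ∧
      Fn.card + zeta ends Fn ≤ F₀.card + zeta ends F₀ + 1 := by
  have huv : u ≠ v := fun h => hnu (h ▸ hrv)
  have hu0 : deg ends F₀ u = 0 := deg_zero_of_not_reach hnu
  have hincu : inc ends e u = 1 := inc_eq_one hm huv
  have hincv : inc ends e v = 1 := inc_eq_one hm.symm huv.symm
  rcases tadpole hm huv hlf hu0 hnu with ⟨Au, t1, ⟨t2a, t2b⟩, t4, t6, t7, t8⟩ |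
    ⟨Ap, _, _, ppv, _, p6, _, _⟩
  swap
  · -- the stuck path reaches v, contradicting that v reaches the support
    exact absurd hrv (p6 v (by rw [ppv]; exact one_ne_zero))
  have hdisj0u : Disjoint F₀ Au := disjoint_of_spec t1
  have heAu : e ∉ Au := fun h => (t1 e h).2 rfl
  have hAuu : deg ends Au u ≠ 0 := by omega
  have hAuv : deg ends Au v = 0 := by
    by_contra h0
    exact t6 v h0 hrv
  have hnotAuReach : ∀ x, deg ends Au x ≠ 0 → deg ends F₀ x = 0 :=
    fun x hx => deg_zero_of_not_reach (t6 x hx)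
  by_cases hv1 : deg ends (F₀ ∪ Au) v = 0
  · -- v is fresh: attach a path from v towards the old support
    obtain ⟨s, hsF₀, hrt⟩ := hrv
    have hsF₁ : deg ends (F₀ ∪ Au) s ≠ 0 :=
      fun h => hsF₀ (Nat.le_zero.mp (h ▸ deg_mono Finset.subset_union_left s))
    obtain ⟨Av, a1, a2, a3, a4, a5, a6, a7⟩ := pathTo (F := F₀ ∪ Au) hv1 hsF₁ hrt
    have hAvReach : ∀ x, deg ends Av x ≠ 0 → Reach ends e F₀ x :=
      fun x hx => ⟨s, hsF₀, a5 x hx⟩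
    have hAvstay : ∀ x, deg ends Au x ≠ 0 → deg ends Av x = 0 := by
      intro x hx
      by_contra h0
      exact t6 x hx (hAvReach x h0)
    have hAvu : deg ends Av u = 0 := by
      by_contra h0
      exact hnu (hAvReach u h0)
    have hAvF₀ : Disjoint F₀ Av := Finset.disjoint_right.mpr
      (fun g hg => fun hgF => (a1 g hg).1 (Finset.mem_union_left _ hgF))
    have hdisj1v : Disjoint (F₀ ∪ Au) Av := disjoint_of_spec a1
    have heAv : e ∉ Av := fun h => (a1 e h).2 rfl
    have he1 : e ∉ (F₀ ∪ Au) ∪ Av := by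
      simp only [Finset.mem_union]
      rintro ((h | h) | h)
      exacts [he h, heAu h, heAv h]
    set Fn := insert e ((F₀ ∪ Au) ∪ Av) with hFn_def
    have hsub : F₀ ⊆ Fn := fun a ha => Finset.mem_insert_of_mem
      (Finset.mem_union_left _ (Finset.mem_union_left _ ha))
    have hdeg : ∀ w, deg ends Fn w =
        inc ends e w + (deg ends F₀ w + deg ends Au w + deg ends Av w) := by
      intro w
      rw [hFn_def, deg_insert he1, deg_union hdisj1v, deg_union hdisj0u]
    have hv0 : deg ends F₀ v = 0 := by
      rw [deg_union hdisj0u] at hv1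
      omega
    have hAvv : deg ends Av v = 1 := a2
    -- the union rearranged for separation arguments
    have hEq : (F₀ ∪ Av) ∪ Au = (F₀ ∪ Au) ∪ Av := by
      ext a
      simp only [Finset.mem_union]
      tauto
    have hdisjAAu : ∀ x, deg ends (F₀ ∪ Av) x ≠ 0 → deg ends Au x ≠ 0 → False := by
      intro x hx hxAu
      rw [deg_union hAvF₀] at hx
      have h1 := hnotAuReach x hxAu
      have h2 := hAvstay x hxAu
      omega
    have hsep : ∀ w, ReflTransGen (adjOn ends ((F₀ ∪ Au) ∪ Av)) u w →
        w = u ∨ (deg ends Au w ≠ 0 ∧ deg ends (F₀ ∪ Av) w = 0) := by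
      intro w hw
      refine sep_stay hdisjAAu ?_ (by rw [hEq]; exact hw)
      rw [deg_union hAvF₀, hu0, hAvu]
    have hnEqv : ¬ Relation.EqvGen (adjOn ends ((F₀ ∪ Au) ∪ Av)) u v := by
      intro hEqv
      rcases hsep v (eqvGen_iff_rt.mp hEqv) with h | ⟨h, _⟩
      · exact huv h.symm
      · exact h hAuv
    have hzlt := zeta_insert_lt' (F := (F₀ ∪ Au) ∪ Av) hm hnEqv
    have hcard : Fn.card = F₀.card + Au.card + Av.card + 1 := by
      rw [hFn_def, Finset.card_insert_of_notMem he1,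
        Finset.card_union_of_disjoint hdisj1v, Finset.card_union_of_disjoint hdisj0u]
    -- leaflessness
    have hlfn : ∀ w, deg ends Fn w ≠ 1 := by
      intro w
      rw [hdeg w]
      by_cases h0 : deg ends F₀ w = 0
      · by_cases hwu : w = u
        · subst hwu
          rw [hincu, h0, hAvu]
          omega
        · by_cases hwv : w = v
          · subst hwv
            rw [hincv, hv0, hAuv, hAvv]
            omega
          · have hincw : inc ends e w = 0 := inc_other_zero hm hwu hwv
            rcases t4 w hwu with h2 | h2
            · have hF₁w : deg ends (F₀ ∪ Au) w = 0 := by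
                rw [deg_union hdisj0u, h0, h2]
              rcases a3 w hwv hF₁w with h3 | h3 <;> omega
            · have hF₁w : deg ends (F₀ ∪ Au) w ≠ 0 := by
                rw [deg_union hdisj0u]; omega
              have h3 := a4 w hF₁w
              omega
      · have h2 := hlf₀ w
        omega
    -- connectivity
    have hmono2 : ∀ a b, Relation.EqvGen (adjOn ends ((F₀ ∪ Au) ∪ Av)) a b →
        Relation.EqvGen (adjOn ends Fn) a b := fun a b hab =>
      Relation.EqvGen.mono (fun p q hpq => adjOn_mono (Finset.subset_insert _ _) hpq) _ _ hab
    have hmonoAu : ∀ a b, Relation.EqvGen (adjOn ends Au) a b →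
        Relation.EqvGen (adjOn ends Fn) a b := fun a b hab =>
      Relation.EqvGen.mono (fun p q hpq => adjOn_mono
        (fun g hg => Finset.mem_insert_of_mem
          (Finset.mem_union_left _ (Finset.mem_union_right _ hg))) hpq) _ _ hab
    have heuv : Relation.EqvGen (adjOn ends Fn) u v :=
      Relation.EqvGen.rel _ _ ⟨e, Finset.mem_insert_self _ _, hm⟩
    have hresolve : ∀ w t₁, deg ends Au w = 0 → deg ends Av w ≠ 0 →
        deg ends (F₀ ∪ Au) t₁ ≠ 0 →
        Relation.EqvGen (adjOn ends ((F₀ ∪ Au) ∪ Av)) w t₁ → deg ends F₀ t₁ ≠ 0 := by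
      intro w t₁ hAuw hAvw ht₁ hc
      rw [deg_union hdisj0u] at ht₁
      by_cases h0 : deg ends F₀ t₁ ≠ 0
      · exact h0
      · push_neg at h0
        have hAut : deg ends Au t₁ ≠ 0 := by omega
        exfalso
        have hwalk : ReflTransGen (adjOn ends ((F₀ ∪ Av) ∪ Au)) t₁ w := by
          rw [hEq]
          exact rt_symm (eqvGen_iff_rt.mp hc)
        have ht₁0 : deg ends (F₀ ∪ Av) t₁ = 0 := by
          by_contra hcon
          exact hdisjAAu t₁ hcon hAut
        rcases sep_stay hdisjAAu ht₁0 hwalk with h | ⟨h, _⟩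
        · rw [← h] at hAut
          exact hAut hAuw
        · exact h hAuw
    have hanchv : ∃ t, deg ends F₀ t ≠ 0 ∧ Relation.EqvGen (adjOn ends Fn) v t := by
      obtain ⟨t₁, ht₁, hc⟩ := a6 v (by rw [hAvv]; exact one_ne_zero)
      exact ⟨t₁, hresolve v t₁ hAuv (by rw [hAvv]; exact one_ne_zero) ht₁ hc,
        hmono2 _ _ hc⟩
    have hanch : ∀ w, deg ends Fn w ≠ 0 → ∃ t, deg ends F₀ t ≠ 0 ∧
        Relation.EqvGen (adjOn ends Fn) w t := by
      intro w hw
      by_cases h0 : deg ends F₀ w ≠ 0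
      · exact ⟨w, h0, Relation.EqvGen.refl _⟩
      · push_neg at h0
        by_cases hAu : deg ends Au w ≠ 0
        · obtain ⟨t, ht, hct⟩ := hanchv
          exact ⟨t, ht, Relation.EqvGen.trans _ _ _
            (Relation.EqvGen.trans _ _ _ (hmonoAu _ _ (t7 w hAu)) heuv) hct⟩
        · push_neg at hAu
          by_cases hAv : deg ends Av w ≠ 0
          · obtain ⟨t₁, ht₁, hc⟩ := a6 w hAv
            exact ⟨t₁, hresolve w t₁ hAu hAv ht₁ hc, hmono2 _ _ hc⟩
          · push_neg at hAv
            rw [hdeg w, h0, hAu, hAv] at hw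
            simp only [add_zero] at hw
            rcases inc_cases' hm hw with rfl | rfl
            · exact absurd hAu hAuu
            · exact absurd hAv (by rw [hAvv]; exact one_ne_zero)
    refine ⟨Fn, hsub, Finset.mem_insert_self _ _, conn_assemble hsub hconn₀ hanch,
      hlfn, ?_⟩
    have hzFn : zeta ends Fn = zeta ends (insert e ((F₀ ∪ Au) ∪ Av)) := by
      rw [hFn_def]
    rw [hcard]
    omega
  · -- v is already in the support of F₀ ∪ Au, hence in F₀'s support
    have hv0 : deg ends F₀ v ≠ 0 := by
      rw [deg_union hdisj0u, hAuv, add_zero] at hv1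
      exact hv1
    have he1 : e ∉ F₀ ∪ Au := by
      simp only [Finset.mem_union]
      rintro (h | h)
      exacts [he h, heAu h]
    set Fn := insert e (F₀ ∪ Au) with hFn_def
    have hsub : F₀ ⊆ Fn := fun a ha =>
      Finset.mem_insert_of_mem (Finset.mem_union_left _ ha)
    have hdeg : ∀ w, deg ends Fn w =
        inc ends e w + (deg ends F₀ w + deg ends Au w) := by
      intro w
      rw [hFn_def, deg_insert he1, deg_union hdisj0u]
    have hnEqv : ¬ Relation.EqvGen (adjOn ends (F₀ ∪ Au)) u v := by
      intro hEqv
      have hdisj' : ∀ x, deg ends F₀ x ≠ 0 → deg ends Au x ≠ 0 → False :=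
        fun x hx hxAu => hx (hnotAuReach x hxAu)
      rcases sep_stay hdisj' hu0 (eqvGen_iff_rt.mp hEqv) with h | ⟨h, _⟩
      · exact huv h.symm
      · exact h hAuv
    have hzlt := zeta_insert_lt' (F := F₀ ∪ Au) hm hnEqv
    have hcard : Fn.card = F₀.card + Au.card + 1 := by
      rw [hFn_def, Finset.card_insert_of_notMem he1,
        Finset.card_union_of_disjoint hdisj0u]
    have hlfn : ∀ w, deg ends Fn w ≠ 1 := by
      intro w
      rw [hdeg w]
      by_cases h0 : deg ends F₀ w = 0
      · by_cases hwu : w = u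
        · subst hwu
          rw [hincu, h0]
          omega
        · have hwv : w ≠ v := fun h => hv0 (h ▸ h0)
          have hincw : inc ends e w = 0 := inc_other_zero hm hwu hwv
          rcases t4 w hwu with h2 | h2 <;> omega
      · have h2 := hlf₀ w
        omega
    have hmonoAu : ∀ a b, Relation.EqvGen (adjOn ends Au) a b →
        Relation.EqvGen (adjOn ends Fn) a b := fun a b hab =>
      Relation.EqvGen.mono (fun p q hpq => adjOn_mono
        (fun g hg => Finset.mem_insert_of_mem (Finset.mem_union_right _ hg)) hpq) _ _ hab
    have heuv : Relation.EqvGen (adjOn ends Fn) u v :=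
      Relation.EqvGen.rel _ _ ⟨e, Finset.mem_insert_self _ _, hm⟩
    have hanch : ∀ w, deg ends Fn w ≠ 0 → ∃ t, deg ends F₀ t ≠ 0 ∧
        Relation.EqvGen (adjOn ends Fn) w t := by
      intro w hw
      by_cases h0 : deg ends F₀ w ≠ 0
      · exact ⟨w, h0, Relation.EqvGen.refl _⟩
      · push_neg at h0
        by_cases hAu : deg ends Au w ≠ 0
        · exact ⟨v, hv0, Relation.EqvGen.trans _ _ _ (hmonoAu _ _ (t7 w hAu)) heuv⟩
        · push_neg at hAu
          rw [hdeg w, h0, hAu] at hw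
          simp only [add_zero] at hw
          rcases inc_cases' hm hw with rfl | rfl
          · exact absurd hAu hAuu
          · exact absurd h0 hv0
    refine ⟨Fn, hsub, Finset.mem_insert_self _ _, conn_assemble hsub hconn₀ hanch,
      hlfn, ?_⟩
    have hzFn : zeta ends Fn = zeta ends (insert e (F₀ ∪ Au)) := by
      rw [hFn_def]
    rw [hcard]
    omega

end StashAux

namespace StashAux
set_option linter.unusedSectionVars false

variable {V E : Type*} [Fintype V] [DecidableEq V] [Fintype E] [DecidableEq E]
variable {ends : E → V × V}

open Relation Finset

lemma step_main
    (hconn : ∀ u v : V, deg ends Finset.univ u ≠ 0 → deg ends Finset.univ v ≠ 0 →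
      Relation.EqvGen (adjOn ends Finset.univ) u v)
    (hlf : ∀ w, deg ends Finset.univ w ≠ 1)
    {F₀ : Finset E} {e : E} (hne : F₀.Nonempty)
    (hconn₀ : Conn ends F₀) (hlf₀ : ∀ w, deg ends F₀ w ≠ 1) (he : e ∉ F₀) :
    ∃ Fn : Finset E, F₀ ⊆ Fn ∧ e ∈ Fn ∧ Conn ends Fn ∧ (∀ w, deg ends Fn w ≠ 1) ∧
      Fn.card + zeta ends Fn ≤ F₀.card + zeta ends F₀ + 1 := by
  have hm : ends e = ((ends e).1, (ends e).2) ∨ ends e = ((ends e).2, (ends e).1) :=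
    Or.inl rfl
  by_cases hru : Reach ends e F₀ (ends e).1
  · by_cases hrv : Reach ends e F₀ (ends e).2
    · exact step_bothreach hm hconn₀ hlf₀ he hru hrv
    · exact step_onereach (Or.inr rfl) hlf hconn₀ hlf₀ he hrv hru
  · have hrv : Reach ends e F₀ (ends e).2 := by
      rcases reach_endpoint hconn hne (e := e) with h | h
      · exact absurd h hru
      · exact h
    exact step_onereach hm hlf hconn₀ hlf₀ he hru hrv

lemma blob (hlf : ∀ w, deg ends Finset.univ w ≠ 1) (e : E) :
    ∃ Fn : Finset E, e ∈ Fn ∧ Conn ends Fn ∧ (∀ w, deg ends Fn w ≠ 1) ∧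
      Fn.card + zeta ends Fn ≤ Fintype.card V + 2 := by
  set u := (ends e).1 with hu_def
  set v := (ends e).2 with hv_def
  have hm : ends e = (u, v) ∨ ends e = (v, u) := Or.inl rfl
  have hzV : ∀ F : Finset E, zeta ends F ≤ Fintype.card V := zeta_le_cardV ends
  by_cases huv : u = v
  · -- a loop: take just the loop
    have hloop : ends e = (u, u) := by rw [← huv] at hm; rcases hm with h | h <;> exact h
    refine ⟨{e}, Finset.mem_singleton_self e, ?_, ?_, ?_⟩
    · have hsupp : ∀ a, deg ends ({e} : Finset E) a ≠ 0 → a = u := by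
        intro a ha
        rw [deg_singleton] at ha
        rcases inc_cases' hm ha with h | h
        · exact h
        · exact h.trans huv.symm
      intro a b ha hb
      rw [hsupp a ha, hsupp b hb]
      exact Relation.EqvGen.refl _
    · intro w
      rw [deg_singleton]
      by_cases hwu : w = u
      · subst hwu
        rw [inc_loop hloop]
        omega
      · rw [inc_other_zero hm hwu (fun h => hwu (h.trans huv.symm))]
        omega
    · have := hzV {e}
      rw [Finset.card_singleton]
      omega
  · have hnr : ¬ Reach ends e (∅ : Finset E) u := by
      rintro ⟨s, hs, _⟩
      exact hs (deg_empty s)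
    rcases tadpole hm huv hlf (deg_empty u) hnr with ⟨Au, t1, ⟨t2a, t2b⟩, t4, t6, t7, t8⟩ |
      ⟨Ap, p1, pu, pv, p4, p6, p7, p8⟩
    · -- got a tadpole at u
      rw [Finset.empty_union] at t8
      have heAu : e ∉ Au := fun h => (t1 e h).2 rfl
      have hAuu : deg ends Au u ≠ 0 := by omega
      have hreachAu_u : Reach ends e Au u := reach_self hAuu
      have hvneu : v ≠ u := fun h => huv h.symm
      by_cases hAuv : deg ends Au v ≠ 0
      · -- the tadpole already covers v
        set Fn := insert e Au with hFn_def
        have hdeg : ∀ w, deg ends Fn w = inc ends e w + deg ends Au w :=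
          fun w => deg_insert heAu w
        have hmono : ∀ a b, Relation.EqvGen (adjOn ends Au) a b →
            Relation.EqvGen (adjOn ends Fn) a b := fun a b hab =>
          Relation.EqvGen.mono (fun p q hpq => adjOn_mono (Finset.subset_insert _ _) hpq) _ _ hab
        have hancu : ∀ w, deg ends Fn w ≠ 0 → Relation.EqvGen (adjOn ends Fn) w u := by
          intro w hw
          rw [hdeg w] at hw
          by_cases hAp : deg ends Au w ≠ 0
          · exact hmono _ _ (t7 w hAp)
          · push_neg at hAp
            rw [hAp, add_zero] at hw
            rcases inc_cases' hm hw with rfl | rfl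
            · exact Relation.EqvGen.refl _
            · exact absurd hAp hAuv
        refine ⟨Fn, Finset.mem_insert_self _ _, ?_, ?_, ?_⟩
        · intro a b ha hb
          exact Relation.EqvGen.trans _ _ _ (hancu a ha)
            (Relation.EqvGen.symm _ _ (hancu b hb))
        · intro w
          rw [hdeg w]
          by_cases hwu : w = u
          · subst hwu
            rw [inc_eq_one hm huv]
            omega
          · by_cases hwv : w = v
            · subst hwv
              rcases t4 v hwu with h | h
              · exact absurd h hAuv
              · rw [inc_eq_one hm.symm hvneu]
                omega
            · rw [inc_other_zero hm hwu hwv]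
              rcases t4 w hwu with h | h <;> omega
        · have hz1 : zeta ends Fn ≤ zeta ends Au := by
            rw [hFn_def]
            exact zeta_mono (Finset.subset_insert _ _)
          have hcard : Fn.card = Au.card + 1 := by
            rw [hFn_def, Finset.card_insert_of_notMem heAu]
          have := hzV (∅ : Finset E)
          rw [hcard]
          omega
      · push_neg at hAuv
        by_cases hrv : Reach ends e Au v
        · -- attach a path from v to the tadpole
          obtain ⟨s, hs, hrt⟩ := hrv
          obtain ⟨Av, a1, a2, a3, a4, a5, a6, a7⟩ := pathTo (F := Au) hAuv hs hrt
          have hdisj : Disjoint Au Av := disjoint_of_spec a1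
          have heAv : e ∉ Av := fun h => (a1 e h).2 rfl
          have he1 : e ∉ Au ∪ Av := by
            simp only [Finset.mem_union]
            rintro (h | h)
            exacts [heAu h, heAv h]
          set Fn := insert e (Au ∪ Av) with hFn_def
          have hdeg : ∀ w, deg ends Fn w =
              inc ends e w + (deg ends Au w + deg ends Av w) := by
            intro w
            rw [hFn_def, deg_insert he1, deg_union hdisj]
          have hmono : ∀ a b, Relation.EqvGen (adjOn ends (Au ∪ Av)) a b →
              Relation.EqvGen (adjOn ends Fn) a b := fun a b hab =>
            Relation.EqvGen.mono (fun p q hpq => adjOn_mono (Finset.subset_insert _ _) hpq) _ _ hab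
          have hmonoAu : ∀ a b, Relation.EqvGen (adjOn ends Au) a b →
              Relation.EqvGen (adjOn ends Fn) a b := fun a b hab =>
            Relation.EqvGen.mono (fun p q hpq => adjOn_mono
              (fun g hg => Finset.mem_insert_of_mem (Finset.mem_union_left _ hg)) hpq) _ _ hab
          have hancu : ∀ w, deg ends Fn w ≠ 0 →
              Relation.EqvGen (adjOn ends Fn) w u := by
            intro w hw
            rw [hdeg w] at hw
            by_cases hAp : deg ends Au w ≠ 0
            · exact hmonoAu _ _ (t7 w hAp)
            · push_neg at hAp
              by_cases hAv : deg ends Av w ≠ 0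
              · obtain ⟨t, ht, hc⟩ := a6 w hAv
                exact Relation.EqvGen.trans _ _ _ (hmono _ _ hc) (hmonoAu _ _ (t7 t ht))
              · push_neg at hAv
                rw [hAp, hAv, add_zero, add_zero] at hw
                rcases inc_cases' hm hw with rfl | rfl
                · exact Relation.EqvGen.refl _
                · exact absurd hAv (by rw [a2]; exact one_ne_zero)
          refine ⟨Fn, Finset.mem_insert_self _ _, ?_, ?_, ?_⟩
          · intro a b ha hb
            exact Relation.EqvGen.trans _ _ _ (hancu a ha)
              (Relation.EqvGen.symm _ _ (hancu b hb))
          · intro w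
            rw [hdeg w]
            by_cases hwu : w = u
            · subst hwu
              rw [inc_eq_one hm huv]
              omega
            · by_cases hwv : w = v
              · subst hwv
                rw [inc_eq_one hm.symm hvneu, hAuv, a2]
                omega
              · rw [inc_other_zero hm hwu hwv]
                rcases t4 w hwu with h | h
                · have hAuw0 : deg ends Au w = 0 := h
                  rcases a3 w hwv hAuw0 with h3 | h3 <;> omega
                · have h3 := a4 w (by omega)
                  omega
          · have hz1 : zeta ends Fn ≤ zeta ends (Au ∪ Av) := by
              rw [hFn_def]
              exact zeta_mono (Finset.subset_insert _ _)
            have hcard : Fn.card = Au.card + Av.card + 1 := by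
              rw [hFn_def, Finset.card_insert_of_notMem he1,
                Finset.card_union_of_disjoint hdisj]
            have := hzV (∅ : Finset E)
            rw [hcard]
            omega
        · -- v cannot reach the tadpole either: grow a second tadpole at v
          rcases tadpole (F := Au) hm.symm hvneu hlf hAuv hrv with
            ⟨Av, s1, ⟨s2a, s2b⟩, s4, s6, s7, s8⟩ | ⟨P, q1, qv, qu, q4, q6, q7, q8⟩
          swap
          · exact absurd hreachAu_u (q6 u (by rw [qu]; exact one_ne_zero))
          have hAvstay : ∀ x, deg ends Av x ≠ 0 → deg ends Au x = 0 :=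
            fun x hx => deg_zero_of_not_reach (s6 x hx)
          have hAvu : deg ends Av u = 0 := by
            by_contra h0
            exact s6 u h0 hreachAu_u
          have hdisj : Disjoint Au Av := Finset.disjoint_left.mpr
            (fun {g} hg hg' => (s1 g hg').1 hg)
          have heAv : e ∉ Av := fun h => (s1 e h).2 rfl
          have he1 : e ∉ Au ∪ Av := by
            simp only [Finset.mem_union]
            rintro (h | h)
            exacts [heAu h, heAv h]
          set Fn := insert e (Au ∪ Av) with hFn_def
          have hdeg : ∀ w, deg ends Fn w =
              inc ends e w + (deg ends Au w + deg ends Av w) := by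
            intro w
            rw [hFn_def, deg_insert he1, deg_union hdisj]
          have hnEqv : ¬ Relation.EqvGen (adjOn ends (Au ∪ Av)) u v := by
            intro h
            have hdisj' : ∀ x, deg ends Av x ≠ 0 → deg ends Au x ≠ 0 → False :=
              fun x hx hy => hy (hAvstay x hx)
            have hwalk : ReflTransGen (adjOn ends (Av ∪ Au)) u v := by
              rw [Finset.union_comm Av Au]
              exact eqvGen_iff_rt.mp h
            rcases sep_stay hdisj' hAvu hwalk with h' | ⟨h', _⟩
            · exact huv h'.symm
            · exact h' hAuv
          have hzlt := zeta_insert_lt' (F := Au ∪ Av) hm hnEqv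
          have hmonoAu : ∀ a b, Relation.EqvGen (adjOn ends Au) a b →
              Relation.EqvGen (adjOn ends Fn) a b := fun a b hab =>
            Relation.EqvGen.mono (fun p q hpq => adjOn_mono
              (fun g hg => Finset.mem_insert_of_mem (Finset.mem_union_left _ hg)) hpq) _ _ hab
          have hmonoAv : ∀ a b, Relation.EqvGen (adjOn ends Av) a b →
              Relation.EqvGen (adjOn ends Fn) a b := fun a b hab =>
            Relation.EqvGen.mono (fun p q hpq => adjOn_mono
              (fun g hg => Finset.mem_insert_of_mem (Finset.mem_union_right _ hg)) hpq) _ _ hab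
          have hev : Relation.EqvGen (adjOn ends Fn) u v :=
            Relation.EqvGen.rel _ _ ⟨e, Finset.mem_insert_self _ _, hm⟩
          have hancu : ∀ w, deg ends Fn w ≠ 0 →
              Relation.EqvGen (adjOn ends Fn) w u := by
            intro w hw
            rw [hdeg w] at hw
            by_cases hAp : deg ends Au w ≠ 0
            · exact hmonoAu _ _ (t7 w hAp)
            · push_neg at hAp
              by_cases hAv : deg ends Av w ≠ 0
              · exact Relation.EqvGen.trans _ _ _ (hmonoAv _ _ (s7 w hAv))
                  (Relation.EqvGen.symm _ _ hev)
              · push_neg at hAv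
                rw [hAp, hAv, add_zero, add_zero] at hw
                rcases inc_cases' hm hw with rfl | rfl
                · exact Relation.EqvGen.refl _
                · exact absurd hAv (by omega)
          refine ⟨Fn, Finset.mem_insert_self _ _, ?_, ?_, ?_⟩
          · intro a b ha hb
            exact Relation.EqvGen.trans _ _ _ (hancu a ha)
              (Relation.EqvGen.symm _ _ (hancu b hb))
          · intro w
            rw [hdeg w]
            by_cases hwu : w = u
            · subst hwu
              rw [inc_eq_one hm huv, hAvu]
              omega
            · by_cases hwv : w = v
              · subst hwv
                rw [inc_eq_one hm.symm hvneu, hAuv]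
                omega
              · rw [inc_other_zero hm hwu hwv]
                rcases t4 w hwu with h | h <;> rcases s4 w hwv with h2 | h2 <;> omega
          · have hzFn : zeta ends Fn = zeta ends (insert e (Au ∪ Av)) := by
              rw [hFn_def]
            have hcard : Fn.card = Au.card + Av.card + 1 := by
              rw [hFn_def, Finset.card_insert_of_notMem he1,
                Finset.card_union_of_disjoint hdisj]
            have := hzV (∅ : Finset E)
            rw [hcard]
            omega
    · -- got a path from u to v: close it with e into a cycle
      rw [Finset.empty_union] at p8
      have heAp : e ∉ Ap := fun h => (p1 e h).2 rfl
      set Fn := insert e Ap with hFn_def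
      have hdeg : ∀ w, deg ends Fn w = inc ends e w + deg ends Ap w :=
        fun w => deg_insert heAp w
      have hancu : ∀ w, deg ends Fn w ≠ 0 → Relation.EqvGen (adjOn ends Fn) w u := by
        have hmono : ∀ a b, Relation.EqvGen (adjOn ends Ap) a b →
            Relation.EqvGen (adjOn ends Fn) a b := fun a b hab =>
          Relation.EqvGen.mono (fun p q hpq => adjOn_mono (Finset.subset_insert _ _) hpq) _ _ hab
        have hev : Relation.EqvGen (adjOn ends Fn) u v :=
          Relation.EqvGen.rel _ _ ⟨e, Finset.mem_insert_self _ _, hm⟩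
        intro w hw
        rw [hdeg w] at hw
        by_cases hAp : deg ends Ap w ≠ 0
        · exact hmono _ _ (p7 w hAp)
        · push_neg at hAp
          rw [hAp, add_zero] at hw
          rcases inc_cases' hm hw with rfl | rfl
          · exact Relation.EqvGen.refl _
          · exact Relation.EqvGen.symm _ _ hev
      refine ⟨Fn, Finset.mem_insert_self _ _, ?_, ?_, ?_⟩
      · intro a b ha hb
        exact Relation.EqvGen.trans _ _ _ (hancu a ha)
          (Relation.EqvGen.symm _ _ (hancu b hb))
      · intro w
        rw [hdeg w]
        by_cases hwu : w = u
        · subst hwu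
          rw [inc_eq_one hm huv, pu]
          omega
        · by_cases hwv : w = v
          · subst hwv
            rw [inc_eq_one hm.symm (fun h => huv h.symm), pv]
            omega
          · rw [inc_other_zero hm hwu hwv]
            rcases p4 w hwu hwv with h | h <;> omega
      · have hz1 : zeta ends Fn ≤ zeta ends Ap := by
          rw [hFn_def]
          exact zeta_mono (Finset.subset_insert _ _)
        have hcard : Fn.card = Ap.card + 1 := by
          rw [hFn_def, Finset.card_insert_of_notMem heAp]
        have := hzV (∅ : Finset E)
        rw [hcard]
        omega

end StashAux

namespace StashAux
set_option linter.unusedSectionVars false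

variable {V E : Type*} [Fintype V] [DecidableEq V] [Fintype E] [DecidableEq E]
variable {ends : E → V × V}

open Relation Finset

lemma main_aux
    (hconn : ∀ u v : V, deg ends Finset.univ u ≠ 0 → deg ends Finset.univ v ≠ 0 →
      Relation.EqvGen (adjOn ends Finset.univ) u v)
    (hlf : ∀ w, deg ends Finset.univ w ≠ 1) (M : Finset E) :
    ∃ F : Finset E, M ⊆ F ∧ Conn ends F ∧ (∀ w, deg ends F w ≠ 1) ∧
      (F = ∅ ∨ F.card + zeta ends F ≤ Fintype.card V + M.card + 1) := by
  induction M using Finset.induction_on with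
  | empty =>
    refine ⟨∅, Finset.Subset.refl _, ?_, ?_, Or.inl rfl⟩
    · intro a b ha _
      exact absurd (deg_empty a) ha
    · intro w
      rw [deg_empty]
      omega
  | @insert e M₀ heM₀ ih =>
    obtain ⟨F₀, hsub₀, hconn₀, hlf₀, hbound₀⟩ := ih
    by_cases heF : e ∈ F₀
    · refine ⟨F₀, Finset.insert_subset heF hsub₀, hconn₀, hlf₀, ?_⟩
      rcases hbound₀ with h | h
      · exact absurd (h ▸ heF) (Finset.notMem_empty e)
      · right
        rw [Finset.card_insert_of_notMem heM₀]
        omega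
    · rcases Finset.eq_empty_or_nonempty F₀ with h0 | hne
      · -- F₀ is empty: build a blob containing e from scratch
        obtain ⟨Fn, heFn, hconnn, hlfn, hcount⟩ := blob (ends := ends) hlf e
        refine ⟨Fn, ?_, hconnn, hlfn, Or.inr ?_⟩
        · subst h0
          have hM₀ : M₀ = ∅ := Finset.subset_empty.mp hsub₀
          subst hM₀
          simpa using heFn
        · rw [Finset.card_insert_of_notMem heM₀]
          omega
      · have hbound : F₀.card + zeta ends F₀ ≤ Fintype.card V + M₀.card + 1 := by
          rcases hbound₀ with h | h
          · exact absurd h (Finset.nonempty_iff_ne_empty.mp hne)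
          · exact h
        obtain ⟨Fn, hsubn, heFn, hconnn, hlfn, hcount⟩ :=
          step_main hconn hlf hne hconn₀ hlf₀ heF
        refine ⟨Fn, Finset.insert_subset heFn (hsub₀.trans hsubn), hconnn, hlfn,
          Or.inr ?_⟩
        rw [Finset.card_insert_of_notMem heM₀]
        omega

end StashAux

/-- Every leafless connected multigraph with `i` marked edges `M` has a leafless
connected subgraph containing all marked edges whose cyclomatic number is at most
`i + 1`. -/
theorem stmt_10 {V E : Type*} [Fintype V] [DecidableEq V] [Fintype E] [DecidableEq E]
    (ends : E → V × V)
    (hconn : ∀ u v : V, deg ends Finset.univ u ≠ 0 → deg ends Finset.univ v ≠ 0 →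
      Relation.EqvGen (adjOn ends Finset.univ) u v)
    (hleafless : ∀ v, deg ends Finset.univ v ≠ 1)
    (M : Finset E) (i : ℕ) (hM : M.card = i) :
    ∃ F' : Finset E, M ⊆ F' ∧
      (∀ u v : V, deg ends F' u ≠ 0 → deg ends F' v ≠ 0 →
        Relation.EqvGen (adjOn ends F') u v) ∧
      (∀ v, deg ends F' v ≠ 1) ∧
      gamma ends F' ≤ i + 1 := by
  obtain ⟨F, hsub, hconnF, hlfF, hbound⟩ := StashAux.main_aux hconn hleafless M
  refine ⟨F, hsub, hconnF, hlfF, ?_⟩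
  have hz := StashAux.zeta_le_cardV ends F
  unfold gamma
  rcases hbound with rfl | h
  · rw [Finset.card_empty]
    omega
  · rw [hM] at h
    omega
end

section
/- If N(t, ℓ, γ, 1) = t^{O(ℓ+γ)} denotes the number of non-isomorphic connected multigraphs with t edges, ℓ of which are leaf edges, and cyclomatic number γ, then for ζ components one has N(t, ℓ, γ, ζ) ≤ N(t+ζ-1, ℓ, γ, 1) · (t-ℓ+ζ-1)^{ζ-1}. -/
namespace CuckooStash

open Classical

/-- A multigraph with `t` edges, represented by its endpoint map into `Fin (2t)`
(enough vertices for any multigraph with `t` edges and no isolated vertices;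
isolated vertices are ignored throughout). -/
abbrev MG (t : ℕ) := Fin t → Fin (2 * t) × Fin (2 * t)

/-- Isomorphism of multigraphs: a permutation of the vertices, a permutation of the
edges, and an orientation flip of each edge, transforming one endpoint map into the
other. -/
def isoRel (t : ℕ) (g₁ g₂ : MG t) : Prop :=
  ∃ (π : Equiv.Perm (Fin (2 * t))) (σ : Equiv.Perm (Fin t)) (flip : Fin t → Bool),
    ∀ e, g₂ (σ e) =
      if flip e then (π (g₁ e).2, π (g₁ e).1) else (π (g₁ e).1, π (g₁ e).2)

/-- The number of leaf edges (edges incident with a vertex of degree 1). -/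
noncomputable def leafEdgeCount (t : ℕ) (g : MG t) : ℕ :=
  (Finset.univ.filter (fun e : Fin t =>
    deg g Finset.univ (g e).1 = 1 ∨ deg g Finset.univ (g e).2 = 1)).card

/-- The number of non-isolated vertices. -/
noncomputable def nonIsoVerts (t : ℕ) (g : MG t) : ℕ :=
  (Finset.univ.filter (fun v => deg g Finset.univ v ≠ 0)).card

/-- The number of connected components containing at least one edge. -/
noncomputable def zetaEdge (t : ℕ) (g : MG t) : ℕ :=
  Nat.card {c : Quotient (compSetoid g Finset.univ) //
    ∃ v, Quotient.mk (compSetoid g Finset.univ) v = c ∧ deg g Finset.univ v ≠ 0}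

/-- The cyclomatic number `γ = m - n + ζ` (isolated vertices ignored). -/
noncomputable def gammaNI (t : ℕ) (g : MG t) : ℕ :=
  t + zetaEdge t g - nonIsoVerts t g

/-- `g` has `t` edges, exactly `l` of which are leaf edges, cyclomatic number `γ`,
and exactly `ζ` connected components (each containing at least one edge). -/
def GraphParams (t l γ ζ : ℕ) (g : MG t) : Prop :=
  leafEdgeCount t g = l ∧ gammaNI t g = γ ∧ zetaEdge t g = ζ

/-- `N t l γ ζ`: the number of non-isomorphic multigraphs with `ζ` connected
components and cyclomatic number `γ` that have `t` edges, `l` of which are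
leaf edges. -/
noncomputable def N (t l γ ζ : ℕ) : ℕ :=
  Nat.card (Quotient (Relation.EqvGen.setoid
    (fun g₁ g₂ : {g : MG t // GraphParams t l γ ζ g} => isoRel t g₁.1 g₂.1)))

end CuckooStash

open CuckooStash


namespace CuckooStash

open Classical Finset

variable {t t₁ t₂ t₃ : ℕ}

/-- `e` is a leaf edge of `G`. -/
def IsLeafEdge {t : ℕ} (G : MG t) (e : Fin t) : Prop :=
  deg G Finset.univ (G e).1 = 1 ∨ deg G Finset.univ (G e).2 = 1

lemma isoRel_refl (g : MG t) : isoRel t g g :=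
  ⟨1, 1, fun _ => false, fun e => by simp⟩

lemma isoRel_symm {g₁ g₂ : MG t} (h : isoRel t g₁ g₂) : isoRel t g₂ g₁ := by
  obtain ⟨π, σ, flip, hf⟩ := h
  refine ⟨π⁻¹, σ⁻¹, fun e => flip (σ⁻¹ e), fun e => ?_⟩
  have := hf (σ⁻¹ e)
  rw [show σ (σ⁻¹ e) = e from σ.apply_symm_apply e] at this
  rcases Bool.eq_false_or_eq_true (flip (σ⁻¹ e)) with hb | hb <;>
    simp only [hb, if_true, if_false] at this ⊢ <;>
    rw [this] <;> simp

lemma isoRel_trans {g₁ g₂ g₃ : MG t} (h : isoRel t g₁ g₂) (h' : isoRel t g₂ g₃) :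
    isoRel t g₁ g₃ := by
  obtain ⟨π₁, σ₁, f₁, hf₁⟩ := h
  obtain ⟨π₂, σ₂, f₂, hf₂⟩ := h'
  refine ⟨π₁.trans π₂, σ₁.trans σ₂, fun e => xor (f₁ e) (f₂ (σ₁ e)), fun e => ?_⟩
  have h2 := hf₂ (σ₁ e)
  have h1 := hf₁ e
  simp only [Equiv.trans_apply]
  rw [h2, h1]
  rcases Bool.eq_false_or_eq_true (f₁ e) with hb1 | hb1 <;>
    rcases Bool.eq_false_or_eq_true (f₂ (σ₁ e)) with hb2 | hb2 <;>
    simp [hb1, hb2]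

lemma isoRel_equivalence (t : ℕ) : Equivalence (isoRel t) :=
  ⟨isoRel_refl, isoRel_symm, isoRel_trans⟩

/-- Vertices incident with an edge of `F`. -/
def Incid {t : ℕ} (g : MG t) (F : Finset (Fin t)) : Set (Fin (2 * t)) :=
  {v | ∃ e ∈ F, (g e).1 = v ∨ (g e).2 = v}

/-- Partial isomorphism between the sub-multigraph of `g₁` on `F₁` and that of `g₂` on `F₂`. -/
def PIso {t₁ t₂ : ℕ} (g₁ : MG t₁) (F₁ : Finset (Fin t₁)) (g₂ : MG t₂)
    (F₂ : Finset (Fin t₂)) : Prop :=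
  ∃ (η : Fin t₁ → Fin t₂) (ρ : Fin (2 * t₁) → Fin (2 * t₂)),
    (∀ e ∈ F₁, η e ∈ F₂) ∧ Set.InjOn η ↑F₁ ∧ (∀ f ∈ F₂, ∃ e ∈ F₁, η e = f) ∧
    Set.InjOn ρ (Incid g₁ F₁) ∧
    ∀ e ∈ F₁, g₂ (η e) = (ρ (g₁ e).1, ρ (g₁ e).2) ∨ g₂ (η e) = (ρ (g₁ e).2, ρ (g₁ e).1)

lemma PIso.trans {g₁ : MG t₁} {F₁ : Finset (Fin t₁)} {g₂ : MG t₂} {F₂ : Finset (Fin t₂)}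
    {g₃ : MG t₃} {F₃ : Finset (Fin t₃)}
    (h : PIso g₁ F₁ g₂ F₂) (h' : PIso g₂ F₂ g₃ F₃) : PIso g₁ F₁ g₃ F₃ := by
  obtain ⟨η₁, ρ₁, hm₁, hi₁, hs₁, hri₁, hmt₁⟩ := h
  obtain ⟨η₂, ρ₂, hm₂, hi₂, hs₂, hri₂, hmt₂⟩ := h'
  have hrm : ∀ v ∈ Incid g₁ F₁, ρ₁ v ∈ Incid g₂ F₂ := by
    rintro v ⟨e, he, hv | hv⟩ <;>
    · refine ⟨η₁ e, hm₁ e he, ?_⟩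
      rcases hmt₁ e he with h | h <;> rw [h] <;> simp [hv]
  refine ⟨η₂ ∘ η₁, ρ₂ ∘ ρ₁, fun e he => hm₂ _ (hm₁ e he), ?_, ?_, ?_, ?_⟩
  · exact hi₂.comp hi₁ (fun e he => by exact_mod_cast hm₁ e he)
  · intro f hf
    obtain ⟨e₂, he₂, rfl⟩ := hs₂ f hf
    obtain ⟨e₁, he₁, rfl⟩ := hs₁ e₂ he₂
    exact ⟨e₁, he₁, rfl⟩
  · exact hri₂.comp hri₁ hrm
  · intro e he
    have h1 := hmt₁ e he
    have h2 := hmt₂ (η₁ e) (hm₁ e he)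
    rcases h1 with h1 | h1 <;> rcases h2 with h2 | h2 <;>
      simp only [Function.comp_apply, h2, h1] <;> simp

lemma PIso.symm {g₁ : MG t₁} {F₁ : Finset (Fin t₁)} {g₂ : MG t₂} {F₂ : Finset (Fin t₂)}
    (ht : 0 < t₁) (h : PIso g₁ F₁ g₂ F₂) : PIso g₂ F₂ g₁ F₁ := by
  obtain ⟨η, ρ, hm, hi, hs, hri, hmt⟩ := h
  have ht2 : 0 < 2 * t₁ := by omega
  set η' : Fin t₂ → Fin t₁ := fun f =>
    if h : ∃ e ∈ F₁, η e = f then h.choose else ⟨0, ht⟩ with hη'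
  set ρ' : Fin (2 * t₂) → Fin (2 * t₁) := fun w =>
    if h : ∃ v ∈ Incid g₁ F₁, ρ v = w then h.choose else ⟨0, ht2⟩ with hρ'
  have hη'spec : ∀ f ∈ F₂, η' f ∈ F₁ ∧ η (η' f) = f := by
    intro f hf
    have hex : ∃ e ∈ F₁, η e = f := hs f hf
    simp only [hη', dif_pos hex]
    exact ⟨hex.choose_spec.1, hex.choose_spec.2⟩
  have hη'left : ∀ e ∈ F₁, η' (η e) = e := by
    intro e he
    have h1 := hη'spec (η e) (hm e he)
    exact hi (by exact_mod_cast h1.1) (by exact_mod_cast he) h1.2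
  have hρ'spec : ∀ w, (∃ v ∈ Incid g₁ F₁, ρ v = w) → ρ' w ∈ Incid g₁ F₁ ∧ ρ (ρ' w) = w := by
    intro w hex
    simp only [hρ', dif_pos hex]
    exact ⟨hex.choose_spec.1, hex.choose_spec.2⟩
  have hρ'left : ∀ v ∈ Incid g₁ F₁, ρ' (ρ v) = v := by
    intro v hv
    have h1 := hρ'spec (ρ v) ⟨v, hv, rfl⟩
    exact hri h1.1 hv h1.2
  have hIm : ∀ w ∈ Incid g₂ F₂, ∃ v ∈ Incid g₁ F₁, ρ v = w := by
    rintro w ⟨f, hf, hw | hw⟩ <;>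
    · obtain ⟨e, he, rfl⟩ := hs f hf
      rcases hmt e he with h | h <;>
        rw [h] at hw <;>
        first
          | exact ⟨(g₁ e).1, ⟨e, he, Or.inl rfl⟩, hw⟩
          | exact ⟨(g₁ e).2, ⟨e, he, Or.inr rfl⟩, hw⟩
  refine ⟨η', ρ', fun f hf => (hη'spec f hf).1, ?_, ?_, ?_, ?_⟩
  · intro f₁ hf₁ f₂ hf₂ heq
    have h1 := hη'spec f₁ (by exact_mod_cast hf₁)
    have h2 := hη'spec f₂ (by exact_mod_cast hf₂)
    rw [← h1.2, ← h2.2, heq]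
  · intro e he
    exact ⟨η e, hm e he, hη'left e he⟩
  · intro w₁ hw₁ w₂ hw₂ heq
    have h1 := hρ'spec w₁ (hIm w₁ hw₁)
    have h2 := hρ'spec w₂ (hIm w₂ hw₂)
    rw [← h1.2, ← h2.2, heq]
  · intro f hf
    obtain ⟨e, he, rfl⟩ := hs f hf
    rw [hη'left e he]
    have hep1 : (g₁ e).1 ∈ Incid g₁ F₁ := ⟨e, he, Or.inl rfl⟩
    have hep2 : (g₁ e).2 ∈ Incid g₁ F₁ := ⟨e, he, Or.inr rfl⟩
    rcases hmt e he with h | h <;> rw [h]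
    · left
      simp only [hρ'left _ hep1, hρ'left _ hep2]
    · right
      simp only [hρ'left _ hep1, hρ'left _ hep2]

end CuckooStash

namespace CuckooStash

open Classical Finset

variable {t t₁ t₂ : ℕ}

lemma deg_eq_sum (G : MG t) (v : Fin (2 * t)) :
    deg G Finset.univ v =
      ∑ e : Fin t, ((if (G e).1 = v then 1 else 0) + if (G e).2 = v then 1 else 0) := by
  rw [deg, Finset.card_filter, Finset.card_filter, ← Finset.sum_add_distrib]

lemma deg_pos_of_mem {G : MG t} {e : Fin t} {v : Fin (2 * t)}
    (h : (G e).1 = v ∨ (G e).2 = v) : 0 < deg G Finset.univ v := by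
  rw [deg_eq_sum]
  have : 0 < (if (G e).1 = v then 1 else 0) + if (G e).2 = v then 1 else 0 := by
    rcases h with h | h <;> simp [h]
  calc 0 < _ := this
    _ ≤ _ := Finset.single_le_sum (f := fun e : Fin t =>
        ((if (G e).1 = v then 1 else 0) + if (G e).2 = v then 1 else 0))
        (fun _ _ => Nat.zero_le _) (Finset.mem_univ e)

lemma exists_edge_of_deg_ne_zero {G : MG t} {v : Fin (2 * t)}
    (h : deg G Finset.univ v ≠ 0) : ∃ e : Fin t, (G e).1 = v ∨ (G e).2 = v := by
  by_contra hc
  push_neg at hc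
  apply h
  rw [deg_eq_sum]
  apply Finset.sum_eq_zero
  intro e _
  have := hc e
  simp [this.1, this.2]

/-- Degrees transport along an isomorphism. -/
lemma deg_isoRel {g₁ g₂ : MG t} (π : Equiv.Perm (Fin (2 * t))) (σ : Equiv.Perm (Fin t))
    (flip : Fin t → Bool)
    (hf : ∀ e, g₂ (σ e) =
      if flip e then (π (g₁ e).2, π (g₁ e).1) else (π (g₁ e).1, π (g₁ e).2)) (v : Fin (2 * t)) :
    deg g₂ Finset.univ (π v) = deg g₁ Finset.univ v := by
  rw [deg_eq_sum, deg_eq_sum]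
  rw [← Equiv.sum_comp σ (fun f => ((if (g₂ f).1 = π v then 1 else 0) +
    if (g₂ f).2 = π v then 1 else 0))]
  apply Finset.sum_congr rfl
  intro e _
  rw [hf e]
  rcases Bool.eq_false_or_eq_true (flip e) with hb | hb <;>
    simp [hb, π.injective.eq_iff] <;> ring

lemma isLeafEdge_isoRel {g₁ g₂ : MG t} (π : Equiv.Perm (Fin (2 * t))) (σ : Equiv.Perm (Fin t))
    (flip : Fin t → Bool)
    (hf : ∀ e, g₂ (σ e) =
      if flip e then (π (g₁ e).2, π (g₁ e).1) else (π (g₁ e).1, π (g₁ e).2)) (e : Fin t) :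
    IsLeafEdge g₂ (σ e) ↔ IsLeafEdge g₁ e := by
  unfold IsLeafEdge
  rw [hf e]
  rcases Bool.eq_false_or_eq_true (flip e) with hb | hb <;>
    simp [hb, deg_isoRel π σ flip hf] <;> tauto

/-- An isomorphism restricts to a partial isomorphism on any edge set. -/
lemma isoRel_toPIso {g₁ g₂ : MG t} (h : isoRel t g₁ g₂) :
    ∃ σ : Equiv.Perm (Fin t),
      (∀ F : Finset (Fin t), PIso g₁ F g₂ (F.image σ)) ∧
      (∀ e, IsLeafEdge g₂ (σ e) ↔ IsLeafEdge g₁ e) := by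
  obtain ⟨π, σ, flip, hf⟩ := h
  refine ⟨σ, fun F => ⟨σ, π, ?_, ?_, ?_, ?_, ?_⟩, isLeafEdge_isoRel π σ flip hf⟩
  · intro e he; exact Finset.mem_image_of_mem _ he
  · exact fun a _ b _ hab => σ.injective hab
  · intro f hf'
    obtain ⟨e, he, rfl⟩ := Finset.mem_image.mp hf'
    exact ⟨e, he, rfl⟩
  · exact fun a _ b _ hab => π.injective hab
  · intro e _
    rw [hf e]
    rcases Bool.eq_false_or_eq_true (flip e) with hb | hb <;> simp [hb]

/-- A partial isomorphism defined on all edges of graphs with the same number of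
edges is an isomorphism. -/
lemma PIso.toIsoRel {g₁ g₂ : MG t} (h : PIso g₁ Finset.univ g₂ Finset.univ) :
    isoRel t g₁ g₂ := by
  obtain ⟨η, ρ, _, hi, hs, hri, hmt⟩ := h
  have hηbij : Function.Bijective η := by
    constructor
    · intro a b hab
      exact hi (by simp) (by simp) hab
    · intro f
      obtain ⟨e, _, he⟩ := hs f (Finset.mem_univ f)
      exact ⟨e, he⟩
  set σ : Equiv.Perm (Fin t) := Equiv.ofBijective η hηbij with hσ
  -- extend ρ (injective on incident vertices) to a permutation
  have hcard : Fintype.card (Fin (2 * t)) = (Finset.univ : Finset (Fin (2 * t))).card := by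
    simp
  have hmapsto : (Incid g₁ Finset.univ).MapsTo ρ (Finset.univ : Finset (Fin (2 * t))) :=
    fun v _ => Finset.mem_univ _
  obtain ⟨π₀, hπ₀⟩ := Set.MapsTo.exists_equiv_extend_of_card_eq hcard hmapsto hri
  set π : Equiv.Perm (Fin (2 * t)) :=
    π₀.trans (Equiv.subtypeUnivEquiv (fun x => Finset.mem_univ x)) with hπ
  have hπρ : ∀ v ∈ Incid g₁ Finset.univ, π v = ρ v := by
    intro v hv
    have := hπ₀ v hv
    simp only [hπ, Equiv.trans_apply, Equiv.subtypeUnivEquiv_apply]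
    exact this
  refine ⟨π, σ, fun e => if g₂ (η e) = (π (g₁ e).1, π (g₁ e).2) then false else true,
    fun e => ?_⟩
  have hin1 : (g₁ e).1 ∈ Incid g₁ Finset.univ := ⟨e, Finset.mem_univ e, Or.inl rfl⟩
  have hin2 : (g₁ e).2 ∈ Incid g₁ Finset.univ := ⟨e, Finset.mem_univ e, Or.inr rfl⟩
  have hσe : σ e = η e := rfl
  rw [hσe]
  by_cases hcase : g₂ (η e) = (π (g₁ e).1, π (g₁ e).2)
  · rw [if_neg (by simp [hcase]), hcase]
  · rw [if_pos (by simp [hcase])]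
    rcases hmt e (Finset.mem_univ e) with h | h
    · exact absurd (by rw [h, hπρ _ hin1, hπρ _ hin2]) hcase
    · rw [h, hπρ _ hin1, hπρ _ hin2]

end CuckooStash

namespace CuckooStash

open Classical Finset

variable {t z l γ : ℕ}

/-- The type of connected components of `g` containing an edge. -/
def ECt {t : ℕ} (g : MG t) :=
  {c : Quotient (compSetoid g Finset.univ) //
    ∃ v, Quotient.mk (compSetoid g Finset.univ) v = c ∧ deg g Finset.univ v ≠ 0}

lemma zetaEdge_eq_card (g : MG t) : zetaEdge t g = Nat.card (ECt g) := rfl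

/-- Pick a representative vertex in a component: of degree at least two if possible. -/
noncomputable def pick (g : MG t) (c : ECt g) : Fin (2 * t) :=
  if h2 : ∃ v, Quotient.mk (compSetoid g Finset.univ) v = c.1 ∧ 2 ≤ deg g Finset.univ v
  then h2.choose else c.2.choose

lemma pick_spec (g : MG t) (c : ECt g) :
    Quotient.mk (compSetoid g Finset.univ) (pick g c) = c.1 ∧
      deg g Finset.univ (pick g c) ≠ 0 := by
  unfold pick
  split
  · next h2 => exact ⟨h2.choose_spec.1, by have := h2.choose_spec.2; omega⟩
  · next h2 => exact c.2.choose_spec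

lemma pick_deg_one (g : MG t) (c : ECt g) (h : deg g Finset.univ (pick g c) = 1) :
    ∀ v, Quotient.mk (compSetoid g Finset.univ) v = c.1 → deg g Finset.univ v ≤ 1 := by
  by_cases h2 : ∃ v, Quotient.mk (compSetoid g Finset.univ) v = c.1 ∧ 2 ≤ deg g Finset.univ v
  · rw [pick, dif_pos h2] at h
    have := h2.choose_spec.2
    omega
  · push_neg at h2
    intro v hv
    have := h2 v hv
    omega

lemma exists_extension (hz : 0 < z) (g : MG t)
    (hp : GraphParams t l γ (z + 1) g) :
    ∃ g' : MG (t + z), GraphParams (t + z) l γ 1 g' ∧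
      (∀ i : Fin z, ¬ IsLeafEdge g' (Fin.natAdd t i)) ∧
      PIso g Finset.univ g' (Finset.univ.filter (fun e : Fin (t + z) => (e : ℕ) < t)) := by
  classical
  obtain ⟨hl, hγ, hζ⟩ := hp
  -- `t` is positive
  have hcard : Nat.card (ECt g) = z + 1 := by rw [← zetaEdge_eq_card]; exact hζ
  have htpos : 0 < t := by
    have hne : Nonempty (ECt g) := (Nat.card_pos_iff.mp (by omega)).1
    obtain ⟨c⟩ := hne
    obtain ⟨v, _, hv⟩ := c.2
    obtain ⟨e, _⟩ := exists_edge_of_deg_ne_zero hv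
    exact e.pos
  have hfin : Finite (ECt g) := by
    have : Finite (Quotient (compSetoid g Finset.univ)) := Quotient.finite _
    exact Subtype.finite
  let ECe : ECt g ≃ Fin (z + 1) := Finite.equivFinOfCardEq hcard
  set u : ECt g → Fin (2 * t) := pick g with hu
  set c0 : ECt g := ECe.symm 0 with hc0
  set S : Fin z → ECt g := fun i => ECe.symm ⟨i.1 + 1, Nat.succ_lt_succ i.isLt⟩ with hS
  set vc : Fin (2 * t) → Fin (2 * (t + z)) := fun v => ⟨v.1, by have := v.isLt; omega⟩ with hvc
  have hvcinj : Function.Injective vc := by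
    intro a b hab
    simp only [hvc, Fin.mk.injEq] at hab
    exact Fin.ext hab
  set g' : MG (t + z) := fun e =>
    if he : (e : ℕ) < t then (vc ((g ⟨e.1, he⟩).1), vc ((g ⟨e.1, he⟩).2))
    else (vc (u (S ⟨e.1 - t, by have := e.isLt; omega⟩)), vc (u c0)) with hg'
  have hold : ∀ e : Fin t, g' (Fin.castAdd z e) = (vc ((g e).1), vc ((g e).2)) := by
    intro e
    have he : ((Fin.castAdd z e : Fin (t + z)) : ℕ) < t := e.isLt
    simp only [hg']
    rw [dif_pos he]
    rfl
  have hnew : ∀ i : Fin z, g' (Fin.natAdd t i) = (vc (u (S i)), vc (u c0)) := by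
    intro i
    have hni : ¬ ((Fin.natAdd t i : Fin (t + z)) : ℕ) < t := by
      show ¬ (t + i.1 < t); omega
    simp only [hg']
    rw [dif_neg hni]
    have harg : (⟨((Fin.natAdd t i : Fin (t + z)) : ℕ) - t,
        by have := (Fin.natAdd t i).isLt; omega⟩ : Fin z) = i := by
      apply Fin.ext
      show t + i.1 - t = i.1
      omega
    rw [harg]
  -- basic properties of the chosen vertices
  have humk : ∀ c : ECt g,
      Quotient.mk (compSetoid g Finset.univ) (u c) = c.1 := fun c => (pick_spec g c).1
  have hupos : ∀ c : ECt g, deg g Finset.univ (u c) ≠ 0 := fun c => (pick_spec g c).2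
  -- degree formula
  set extra : Fin (2 * t) → ℕ := fun v =>
    (if u c0 = v then z else 0) +
      (Finset.univ.filter (fun i : Fin z => u (S i) = v)).card with hextra
  have hdeg : ∀ v : Fin (2 * t),
      deg g' Finset.univ (vc v) = deg g Finset.univ v + extra v := by
    intro v
    rw [deg_eq_sum, deg_eq_sum, Fin.sum_univ_add]
    have h1 : (∑ e : Fin t, ((if (g' (Fin.castAdd z e)).1 = vc v then 1 else 0) +
        if (g' (Fin.castAdd z e)).2 = vc v then 1 else 0)) =
        ∑ e : Fin t, ((if (g e).1 = v then 1 else 0) + if (g e).2 = v then 1 else 0) := by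
      apply Finset.sum_congr rfl
      intro e _
      rw [hold e]
      simp [hvcinj.eq_iff]
    have h2 : (∑ i : Fin z, ((if (g' (Fin.natAdd t i)).1 = vc v then 1 else 0) +
        if (g' (Fin.natAdd t i)).2 = vc v then 1 else 0)) = extra v := by
      have hterm : ∀ i : Fin z, ((if (g' (Fin.natAdd t i)).1 = vc v then 1 else 0) +
          if (g' (Fin.natAdd t i)).2 = vc v then 1 else 0) =
          ((if u (S i) = v then 1 else 0) + if u c0 = v then 1 else 0) := by
        intro i
        rw [hnew i]
        simp [hvcinj.eq_iff]
      rw [Finset.sum_congr rfl (fun i _ => hterm i), Finset.sum_add_distrib]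
      simp only [hextra]
      rw [← Finset.card_filter]
      have hc0sum : (∑ _i : Fin z, if u c0 = v then 1 else 0) =
          (if u c0 = v then z else 0) := by
        by_cases h : u c0 = v <;> simp [h]
      rw [hc0sum]
      ring
    rw [h1, h2]
  -- every endpoint of `g'` is in the range of `vc`
  have hend : ∀ e : Fin (t + z), ∃ a b, g' e = (vc a, vc b) := by
    intro e
    simp only [hg']
    split
    · exact ⟨_, _, rfl⟩
    · exact ⟨_, _, rfl⟩
  have hrange : ∀ w : Fin (2 * (t + z)), (∀ v, vc v ≠ w) → deg g' Finset.univ w = 0 := by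
    intro w hw
    rw [deg_eq_sum]
    apply Finset.sum_eq_zero
    intro e _
    obtain ⟨a, b, hab⟩ := hend e
    rw [hab]
    simp only
    rw [if_neg (hw a), if_neg (hw b)]
    rfl
  -- if `extra v` is nonzero then `v` is a chosen vertex
  have hextra_pos : ∀ v, extra v ≠ 0 → ∃ c : ECt g, u c = v := by
    intro v hv
    simp only [hextra] at hv
    by_cases h : u c0 = v
    · exact ⟨c0, h⟩
    · rw [if_neg h] at hv
      have hne : (Finset.univ.filter (fun i : Fin z => u (S i) = v)).Nonempty := by
        rw [← Finset.card_pos]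
        omega
      obtain ⟨i, hi⟩ := hne
      exact ⟨S i, (Finset.mem_filter.mp hi).2⟩
  -- the number of non-isolated vertices is unchanged
  have hnonIso : nonIsoVerts (t + z) g' = nonIsoVerts t g := by
    unfold nonIsoVerts
    have himg : Finset.univ.filter (fun w => deg g' Finset.univ w ≠ 0) =
        (Finset.univ.filter (fun v => deg g Finset.univ v ≠ 0)).image vc := by
      ext w
      simp only [Finset.mem_filter, Finset.mem_image, Finset.mem_univ, true_and]
      constructor
      · intro hw
        by_cases hr : ∃ v, vc v = w
        · obtain ⟨v, rfl⟩ := hr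
          refine ⟨v, ?_, rfl⟩
          intro h0
          rw [hdeg v, h0] at hw
          obtain ⟨c, hc⟩ := hextra_pos v (by omega)
          exact hupos c (by rw [hc]; exact h0)
        · push_neg at hr
          exact absurd (hrange w hr) hw
      · rintro ⟨v, hv, rfl⟩
        rw [hdeg v]
        have : 0 < deg g Finset.univ v := Nat.pos_of_ne_zero hv
        omega
    rw [himg, Finset.card_image_of_injective _ hvcinj]
  -- the new edges are not leaf edges
  have hle_new : ∀ i : Fin z, ¬ IsLeafEdge g' (Fin.natAdd t i) := by
    intro i
    unfold IsLeafEdge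
    rw [hnew i]
    have h1 : 1 ≤ (Finset.univ.filter (fun i' : Fin z => u (S i') = u (S i))).card :=
      Finset.card_pos.mpr ⟨i, by simp⟩
    have h2 : 1 ≤ deg g Finset.univ (u (S i)) := Nat.pos_of_ne_zero (hupos (S i))
    have h3 : 1 ≤ deg g Finset.univ (u c0) := Nat.pos_of_ne_zero (hupos c0)
    have e1 : 2 ≤ deg g' Finset.univ (vc (u (S i))) := by
      rw [hdeg]
      have hx : extra (u (S i)) =
          (if u c0 = u (S i) then z else 0) +
            (Finset.univ.filter (fun i' : Fin z => u (S i') = u (S i))).card := by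
        simp only [hextra]
      omega
    have e2 : 2 ≤ deg g' Finset.univ (vc (u c0)) := by
      rw [hdeg]
      have hx : extra (u c0) =
          z + (Finset.univ.filter (fun i' : Fin z => u (S i') = u c0)).card := by
        simp only [hextra]
        simp
      omega
    simp only
    rintro (h | h) <;> omega
  -- key lemma: the other endpoint of the unique edge at a chosen degree-one vertex
  have hA : ∀ (c : ECt g) (f : Fin t) (w : Fin (2 * t)),
      deg g Finset.univ (u c) = 1 →
      (((g f).1 = u c ∧ (g f).2 = w) ∨ ((g f).2 = u c ∧ (g f).1 = w)) →
      deg g' Finset.univ (vc w) = 1 := by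
    intro c f w hdeg1 hcase
    have hwne : w ≠ u c := by
      intro hwc
      have hterm : ((if (g f).1 = u c then 1 else 0) + if (g f).2 = u c then 1 else 0) = 2 := by
        rcases hcase with ⟨h1, h2⟩ | ⟨h1, h2⟩ <;> simp [h1, h2, hwc]
      have h2 : 2 ≤ deg g Finset.univ (u c) := by
        rw [deg_eq_sum]
        calc 2 = _ := hterm.symm
          _ ≤ _ := Finset.single_le_sum (f := fun e : Fin t =>
              ((if (g e).1 = u c then 1 else 0) + if (g e).2 = u c then 1 else 0))
              (fun _ _ => Nat.zero_le _) (Finset.mem_univ f)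
      omega
    have hadj : adjOn g Finset.univ (u c) w := by
      rcases hcase with ⟨h1, h2⟩ | ⟨h1, h2⟩
      · exact ⟨f, Finset.mem_univ f, Or.inl (by rw [← h1, ← h2])⟩
      · exact ⟨f, Finset.mem_univ f, Or.inr (by rw [← h1, ← h2])⟩
    have hwcomp : Quotient.mk (compSetoid g Finset.univ) w = c.1 := by
      rw [← humk c]
      exact Quotient.sound (Relation.EqvGen.symm _ _ (Relation.EqvGen.rel _ _ hadj))
    have hwdeg : deg g Finset.univ w = 1 := by
      have hle' : deg g Finset.univ w ≤ 1 := pick_deg_one g c hdeg1 w hwcomp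
      have hpos : 0 < deg g Finset.univ w := by
        apply deg_pos_of_mem (G := g) (e := f)
        rcases hcase with ⟨_, h2⟩ | ⟨_, h2⟩
        · exact Or.inr h2
        · exact Or.inl h2
      omega
    have hwext : extra w = 0 := by
      by_contra hne
      obtain ⟨c', hc'⟩ := hextra_pos w hne
      have hcc' : c' = c := by
        apply Subtype.ext
        rw [← humk c', hc', hwcomp]
      exact hwne (by rw [← hc', hcc'])
    rw [hdeg w, hwdeg, hwext]
  -- leaf edges among the old edges are unchanged
  have hle_old : ∀ e : Fin t, IsLeafEdge g' (Fin.castAdd z e) ↔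
      (deg g Finset.univ (g e).1 = 1 ∨ deg g Finset.univ (g e).2 = 1) := by
    intro e
    unfold IsLeafEdge
    rw [hold e]
    simp only
    constructor
    · rintro (h | h)
      · rw [hdeg] at h
        have hp : 0 < deg g Finset.univ (g e).1 := deg_pos_of_mem (e := e) (Or.inl rfl)
        left; omega
      · rw [hdeg] at h
        have hp : 0 < deg g Finset.univ (g e).2 := deg_pos_of_mem (e := e) (Or.inr rfl)
        right; omega
    · rintro (h | h)
      · by_cases hx : extra (g e).1 = 0
        · left; rw [hdeg, h, hx]
        · obtain ⟨c, hc⟩ := hextra_pos _ hx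
          exact Or.inr (hA c e (g e).2 (by rw [hc]; exact h) (Or.inl ⟨hc.symm, rfl⟩))
      · by_cases hx : extra (g e).2 = 0
        · right; rw [hdeg, h, hx]
        · obtain ⟨c, hc⟩ := hextra_pos _ hx
          exact Or.inl (hA c e (g e).1 (by rw [hc]; exact h) (Or.inr ⟨hc.symm, rfl⟩))
  -- the number of leaf edges is unchanged
  have hleaf : leafEdgeCount (t + z) g' = l := by
    rw [← hl]
    unfold leafEdgeCount
    rw [Finset.card_filter, Finset.card_filter, Fin.sum_univ_add]
    have hz0 : (∑ i : Fin z, if deg g' Finset.univ (g' (Fin.natAdd t i)).1 = 1 ∨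
        deg g' Finset.univ (g' (Fin.natAdd t i)).2 = 1 then 1 else 0) = 0 := by
      apply Finset.sum_eq_zero
      intro i _
      exact if_neg (hle_new i)
    rw [hz0, Nat.add_zero]
    apply Finset.sum_congr rfl
    intro e _
    exact if_congr (hle_old e) rfl rfl
  -- connectivity
  have hlift : ∀ a b, Relation.EqvGen (adjOn g Finset.univ) a b →
      Relation.EqvGen (adjOn g' Finset.univ) (vc a) (vc b) := by
    intro a b h
    induction h with
    | rel x y hxy =>
      obtain ⟨e, _, hcase⟩ := hxy
      apply Relation.EqvGen.rel
      refine ⟨Fin.castAdd z e, Finset.mem_univ _, ?_⟩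
      rw [hold e]
      rcases hcase with h | h <;> rw [h]
      · exact Or.inl rfl
      · exact Or.inr rfl
    | refl x => exact Relation.EqvGen.refl _
    | symm x y _ ih => exact Relation.EqvGen.symm _ _ ih
    | trans x y z' _ _ ih1 ih2 => exact Relation.EqvGen.trans _ _ _ ih1 ih2
  have hstep : ∀ i : Fin z,
      Relation.EqvGen (adjOn g' Finset.univ) (vc (u (S i))) (vc (u c0)) := fun i =>
    Relation.EqvGen.rel _ _ ⟨Fin.natAdd t i, Finset.mem_univ _, Or.inl (hnew i)⟩
  have hcc : ∀ c : ECt g,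
      Relation.EqvGen (adjOn g' Finset.univ) (vc (u c)) (vc (u c0)) := by
    intro c
    rcases Nat.eq_zero_or_pos (ECe c).1 with h0 | hpos
    · have hcc0 : c = c0 := by
        rw [hc0, show (0 : Fin (z + 1)) = ECe c from (Fin.ext h0.symm),
          Equiv.symm_apply_apply]
      rw [hcc0]
      exact Relation.EqvGen.refl _
    · have hlt : (ECe c).1 - 1 < z := by have := (ECe c).isLt; omega
      have hSc : S ⟨(ECe c).1 - 1, hlt⟩ = c := by
        simp only [hS]
        rw [show (⟨(ECe c).1 - 1 + 1, Nat.succ_lt_succ hlt⟩ : Fin (z + 1)) = ECe c from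
          Fin.ext (by simp only []; omega), Equiv.symm_apply_apply]
      rw [← hSc]
      exact hstep _
  have hvert : ∀ w, deg g' Finset.univ w ≠ 0 →
      Relation.EqvGen (adjOn g' Finset.univ) w (vc (u c0)) := by
    intro w hw
    obtain ⟨e, hcase⟩ := exists_edge_of_deg_ne_zero hw
    by_cases he : (e : ℕ) < t
    · have heq : Fin.castAdd z (⟨e.1, he⟩ : Fin t) = e := Fin.ext rfl
      have hge := hold ⟨e.1, he⟩
      rw [heq] at hge
      obtain ⟨a, ha, hwa⟩ : ∃ a : Fin (2 * t),
          ((g ⟨e.1, he⟩).1 = a ∨ (g ⟨e.1, he⟩).2 = a) ∧ vc a = w := by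
        rcases hcase with h | h
        · exact ⟨(g ⟨e.1, he⟩).1, Or.inl rfl, by rw [← h, hge]⟩
        · exact ⟨(g ⟨e.1, he⟩).2, Or.inr rfl, by rw [← h, hge]⟩
      have hdega : deg g Finset.univ a ≠ 0 := (deg_pos_of_mem ha).ne'
      have hrel : Relation.EqvGen (adjOn g Finset.univ) a
          (u ⟨Quotient.mk (compSetoid g Finset.univ) a, ⟨a, rfl, hdega⟩⟩) :=
        Relation.EqvGen.symm _ _
          (Quotient.exact (humk ⟨Quotient.mk (compSetoid g Finset.univ) a, ⟨a, rfl, hdega⟩⟩))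
      rw [← hwa]
      exact Relation.EqvGen.trans _ _ _ (hlift a _ hrel) (hcc _)
    · have hlt : e.1 - t < z := by have := e.isLt; omega
      have heq : Fin.natAdd t (⟨e.1 - t, hlt⟩ : Fin z) = e := Fin.ext (by
        show t + (e.1 - t) = e.1; omega)
      have hge := hnew ⟨e.1 - t, hlt⟩
      rw [heq] at hge
      rcases hcase with h | h
      · rw [← h, hge]
        exact hcc _
      · rw [← h, hge]
        exact Relation.EqvGen.refl _
  have hzeta' : zetaEdge (t + z) g' = 1 := by
    rw [zetaEdge_eq_card, Nat.card_eq_one_iff_unique]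
    constructor
    · constructor
      rintro ⟨c₁, v₁, rfl, hv₁⟩ ⟨c₂, v₂, rfl, hv₂⟩
      exact Subtype.ext (Quotient.sound (Relation.EqvGen.trans _ _ _ (hvert v₁ hv₁)
        (Relation.EqvGen.symm _ _ (hvert v₂ hv₂))))
    · have hpos := deg_pos_of_mem (G := g') (e := (⟨0, by omega⟩ : Fin (t + z))) (Or.inl rfl)
      exact ⟨⟨Quotient.mk (compSetoid g' Finset.univ) _, ⟨_, rfl, hpos.ne'⟩⟩⟩
  have hgam : gammaNI (t + z) g' = γ := by
    rw [← hγ]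
    unfold gammaNI
    rw [hzeta', hζ, hnonIso]
    omega
  refine ⟨g', ⟨hleaf, hgam, hzeta'⟩, hle_new, ?_⟩
  refine ⟨Fin.castAdd z, vc, ?_, ?_, ?_, ?_, ?_⟩
  · intro e _
    exact Finset.mem_filter.mpr ⟨Finset.mem_univ _, e.isLt⟩
  · intro a _ b _ hab
    have h := congrArg (fun x : Fin (t + z) => (x : ℕ)) hab
    exact Fin.ext h
  · intro f hf
    have hft : (f : ℕ) < t := (Finset.mem_filter.mp hf).2
    exact ⟨⟨f.1, hft⟩, Finset.mem_univ _, Fin.ext rfl⟩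
  · intro a _ b _ hab
    exact hvcinj hab
  · intro e _
    exact Or.inl (hold e)

end CuckooStash

namespace CuckooStash

open Classical Finset

variable {t z l γ : ℕ}

lemma param_t_pos {t l γ ζ : ℕ} (hζ : 0 < ζ) {g : MG t} (hp : GraphParams t l γ ζ g) :
    0 < t := by
  have hc : Nat.card (ECt g) = ζ := by rw [← zetaEdge_eq_card]; exact hp.2.2
  have hne : Nonempty (ECt g) := (Nat.card_pos_iff.mp (by omega)).1
  obtain ⟨c⟩ := hne
  obtain ⟨v, _, hv⟩ := c.2
  obtain ⟨e, _⟩ := exists_edge_of_deg_ne_zero hv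
  exact e.pos

/-- The subtype of multigraphs with given parameters. -/
def Ar (t l γ ζ : ℕ) := {g : MG t // GraphParams t l γ ζ g}

/-- Isomorphism relation on `Ar`. -/
def rr (t l γ ζ : ℕ) : Ar t l γ ζ → Ar t l γ ζ → Prop := fun g₁ g₂ => isoRel t g₁.1 g₂.1

/-- The type of isomorphism classes. -/
def Qr (t l γ ζ : ℕ) := Quotient (Relation.EqvGen.setoid (rr t l γ ζ))

lemma N_eq (t l γ ζ : ℕ) : N t l γ ζ = Nat.card (Qr t l γ ζ) := rfl

lemma rr_equivalence (t l γ ζ : ℕ) : Equivalence (rr t l γ ζ) :=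
  ⟨fun a => isoRel_refl a.1, fun hab => isoRel_symm hab, fun hab hbc => isoRel_trans hab hbc⟩

/-- The non-leaf edges. -/
noncomputable def NLs {T : ℕ} (h : MG T) : Finset (Fin T) :=
  Finset.univ.filter (fun e => ¬ IsLeafEdge h e)

instance (t l γ ζ : ℕ) : Finite (Ar t l γ ζ) := Subtype.finite
instance (t l γ ζ : ℕ) : Finite (Qr t l γ ζ) := Quotient.finite _

lemma NLs_card {T L : ℕ} (h : MG T) (hc : leafEdgeCount T h = L) : (NLs h).card = T - L := by
  have key := Finset.card_filter_add_card_filter_not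
    (s := (Finset.univ : Finset (Fin T))) (p := fun e => IsLeafEdge h e)
  have h1 : (Finset.univ.filter (fun e : Fin T => IsLeafEdge h e)).card = L := by
    rw [← hc, leafEdgeCount]
    exact congrArg Finset.card (Finset.filter_congr (fun e _ => Iff.rfl))
  rw [h1, Finset.card_univ, Fintype.card_fin] at key
  rw [NLs]
  omega

/-- The decoding map: from a connected class with a tuple of non-leaf edges to the class
of the graph obtained by removing those edges. -/
noncomputable def ΨF (t z l γ : ℕ) [Nonempty (Ar t l γ (z + 1))] :
    (Σ C : Qr (t + z) l γ 1, (Fin z → {e : Fin (t + z) // e ∈ NLs (Quotient.out C).1})) →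
      Qr t l γ (z + 1) := fun p =>
  if H : ∃ a : Ar t l γ (z + 1), PIso a.1 Finset.univ (Quotient.out p.1).1
      (Finset.univ \ Finset.univ.image (fun i : Fin z => ((p.2 i : Fin (t + z)))))
  then Quotient.mk _ H.choose
  else Quotient.mk _ (Classical.arbitrary _)

lemma ΨF_surj (t z l γ : ℕ) (hz : 0 < z) [Nonempty (Ar t l γ (z + 1))] :
    Function.Surjective (ΨF t z l γ) := by
  intro x
  obtain ⟨g, hgx⟩ : ∃ a : Ar t l γ (z + 1),
      Quotient.mk (Relation.EqvGen.setoid (rr t l γ (z + 1))) a = x :=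
    ⟨Quotient.out x, Quotient.out_eq x⟩
  have htpos : 0 < t := param_t_pos (by omega) g.2
  obtain ⟨g', hp', hNLe, hPI⟩ := exists_extension hz g.1 g.2
  have hCeq : Quotient.mk (Relation.EqvGen.setoid (rr (t + z) l γ 1))
      (Quotient.out (Quotient.mk (Relation.EqvGen.setoid (rr (t + z) l γ 1))
        (⟨g', hp'⟩ : Ar (t + z) l γ 1))) =
      Quotient.mk (Relation.EqvGen.setoid (rr (t + z) l γ 1)) ⟨g', hp'⟩ :=
    Quotient.out_eq _
  set h : Ar (t + z) l γ 1 :=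
    Quotient.out (Quotient.mk (Relation.EqvGen.setoid (rr (t + z) l γ 1))
      (⟨g', hp'⟩ : Ar (t + z) l γ 1)) with hh
  have hrel0 : Relation.EqvGen (rr (t + z) l γ 1) h ⟨g', hp'⟩ := Quotient.exact hCeq
  have hiso : isoRel (t + z) g' h.1 :=
    isoRel_symm ((Equivalence.eqvGen_iff (rr_equivalence (t + z) l γ 1)).mp hrel0)
  obtain ⟨σ, hPIσ, hLσ⟩ := isoRel_toPIso hiso
  have hnlf : ∀ i : Fin z, σ (Fin.natAdd t i) ∈ NLs h.1 := by
    intro i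
    rw [NLs, Finset.mem_filter]
    refine ⟨Finset.mem_univ _, ?_⟩
    rw [hLσ (Fin.natAdd t i)]
    exact hNLe i
  refine ⟨⟨Quotient.mk _ ⟨g', hp'⟩, fun i => ⟨σ (Fin.natAdd t i), hnlf i⟩⟩, ?_⟩
  have hset : (Finset.univ.filter (fun e : Fin (t + z) => (e : ℕ) < t)).image σ =
      Finset.univ \ Finset.univ.image (fun i : Fin z => σ (Fin.natAdd t i)) := by
    have h0 : Finset.univ.filter (fun e : Fin (t + z) => (e : ℕ) < t) =
        Finset.univ \ Finset.univ.image (fun i : Fin z => Fin.natAdd t i) := by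
      ext e
      simp only [Finset.mem_filter, Finset.mem_sdiff, Finset.mem_univ, true_and,
        Finset.mem_image, not_exists]
      constructor
      · intro hlt
        intro i hi
        have hval : t + (i : ℕ) = (e : ℕ) := congrArg Fin.val hi
        omega
      · intro hni
        by_contra hgt
        exact hni ⟨(e : ℕ) - t, by have := e.isLt; omega⟩
          (Fin.ext (by show t + ((e : ℕ) - t) = (e : ℕ); omega))
    rw [h0, Finset.image_sdiff _ _ σ.injective, Finset.image_image,
      Finset.image_univ_equiv σ]
    rfl
  have hp2 := hPIσ (Finset.univ.filter (fun e : Fin (t + z) => (e : ℕ) < t))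
  rw [hset] at hp2
  have hPIg : PIso g.1 Finset.univ h.1
      (Finset.univ \ Finset.univ.image (fun i : Fin z => σ (Fin.natAdd t i))) :=
    hPI.trans hp2
  have hH : ∃ a : Ar t l γ (z + 1), PIso a.1 Finset.univ h.1
      (Finset.univ \ Finset.univ.image (fun i : Fin z => σ (Fin.natAdd t i))) := ⟨g, hPIg⟩
  have hcomp : ΨF t z l γ ⟨Quotient.mk _ ⟨g', hp'⟩, fun i => ⟨σ (Fin.natAdd t i), hnlf i⟩⟩ =
      Quotient.mk (Relation.EqvGen.setoid (rr t l γ (z + 1))) hH.choose := by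
    rw [ΨF]
    exact dif_pos hH
  rw [hcomp, ← hgx]
  apply Quotient.sound
  have hsymm : PIso h.1
      (Finset.univ \ Finset.univ.image (fun i : Fin z => σ (Fin.natAdd t i)))
      g.1 Finset.univ := PIso.symm htpos hPIg
  exact Relation.EqvGen.rel _ _ ((hH.choose_spec.trans hsymm).toIsoRel)

end CuckooStash

open CuckooStash


/-- `N(t, l, γ, ζ) ≤ N(t + ζ - 1, l, γ, 1) · (t - l + ζ - 1)^(ζ - 1)`:
every graph with `ζ` components arises from a connected graph with the same number of
leaf edges and cyclomatic number and `t + ζ - 1` edges by removing `ζ - 1` non-leaf,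
non-cycle edges. -/
theorem stmt_13 (t l γ ζ : ℕ) (hζ : 1 ≤ ζ) (hl : l ≤ t) :
    N t l γ ζ ≤ N (t + ζ - 1) l γ 1 * (t - l + ζ - 1) ^ (ζ - 1) := by
  classical
  obtain ⟨z, rfl⟩ : ∃ z, ζ = z + 1 := ⟨ζ - 1, by omega⟩
  rcases Nat.eq_zero_or_pos z with rfl | hz
  · simp
  have e1 : t + (z + 1) - 1 = t + z := by omega
  have e2 : t - l + (z + 1) - 1 = t - l + z := by omega
  have e3 : z + 1 - 1 = z := by omega
  rw [e1, e2, e3]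
  by_cases hne : Nonempty (Ar t l γ (z + 1))
  · haveI := hne
    have step1 : N t l γ (z + 1) ≤
        Nat.card (Σ C : Qr (t + z) l γ 1,
          (Fin z → {e : Fin (t + z) // e ∈ NLs (Quotient.out C).1})) := by
      rw [N_eq]
      exact Nat.card_le_card_of_surjective _ (ΨF_surj t z l γ hz)
    have hNLcard : ∀ C : Qr (t + z) l γ 1,
        Nat.card {e : Fin (t + z) // e ∈ NLs (Quotient.out C).1} = t - l + z := by
      intro C
      have hNL : (NLs (Quotient.out C).1).card = (t + z) - l :=
        NLs_card _ (Quotient.out C).2.1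
      calc Nat.card {e : Fin (t + z) // e ∈ NLs (Quotient.out C).1}
          = (NLs (Quotient.out C).1).card := Nat.card_eq_finsetCard _
        _ = t - l + z := by rw [hNL]; omega
    have step2 : Nat.card (Σ C : Qr (t + z) l γ 1,
        (Fin z → {e : Fin (t + z) // e ∈ NLs (Quotient.out C).1})) ≤
        Nat.card (Qr (t + z) l γ 1 × (Fin z → Fin (t - l + z))) := by
      have eC : ∀ C : Qr (t + z) l γ 1,
          {e : Fin (t + z) // e ∈ NLs (Quotient.out C).1} ≃ Fin (t - l + z) :=
        fun C => Finite.equivFinOfCardEq (hNLcard C)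
      apply Nat.card_le_card_of_injective
        (fun p : (Σ C : Qr (t + z) l γ 1,
          (Fin z → {e : Fin (t + z) // e ∈ NLs (Quotient.out C).1})) =>
          ((p.1, fun i => eC p.1 (p.2 i)) : Qr (t + z) l γ 1 × (Fin z → Fin (t - l + z))))
      rintro ⟨C₁, τ₁⟩ ⟨C₂, τ₂⟩ hpq
      have h1 : C₁ = C₂ := congrArg Prod.fst hpq
      subst h1
      have h2 : (fun i => eC C₁ (τ₁ i)) = fun i => eC C₁ (τ₂ i) := congrArg Prod.snd hpq
      have h3 : τ₁ = τ₂ := by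
        funext i
        exact (eC C₁).injective (congrFun h2 i)
      rw [h3]
    have step3 : Nat.card (Qr (t + z) l γ 1 × (Fin z → Fin (t - l + z))) =
        N (t + z) l γ 1 * (t - l + z) ^ z := by
      rw [Nat.card_prod, Nat.card_fun,
        Nat.card_eq_fintype_card (α := Fin (t - l + z)), Fintype.card_fin,
        Nat.card_eq_fintype_card (α := Fin z), Fintype.card_fin, N_eq]
    calc N t l γ (z + 1) ≤ _ := step1
      _ ≤ _ := step2
      _ = _ := step3
  · have hemp : IsEmpty (Ar t l γ (z + 1)) := not_nonempty_iff.mp hne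
    have hq : IsEmpty (Qr t l γ (z + 1)) := by
      constructor
      intro q
      exact Quotient.ind (motive := fun _ => False) (fun a => hemp.false a) q
    have h0 : N t l γ (z + 1) = 0 := by
      rw [N_eq]
      exact Nat.card_of_isEmpty
    rw [h0]
    exact Nat.zero_le _
end
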